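/- arXiv:2601.15694 — 14 statements merged into one kernel-verified Lean document; each statement's English description precedes it below -/
import Mathlib

section
/- Let G be a locally compact Hausdorff topological group. Then the following are equivalent: (i) G is second countable; (ii) G is σ-compact and first countable; (iii) the set G \ {1_G} is σ-compact, i.e. a countable union of compact subsets of G. -/
open Filter Set Topology Uniformity

/-- In a locally compact Hausdorff space, if `{x}` is a countable intersection of open sets,
then `𝓝 x` is countably generated. -/
lemma aux_countablyGenerated_nhds_of_iInter_eq_singleton
    {X : Type*} [TopologicalSpace X] [LocallyCompactSpace X] [T2Space X]
    {x : X} {U : ℕ → Set X} (hU : ∀ n, IsOpen (U n)) (hUx : ⋂ n, U n = {x}) :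
    (𝓝 x).IsCountablyGenerated := by
  have hx : ∀ n, x ∈ U n := fun n =>
    mem_iInter.1 (hUx ▸ (rfl : x ∈ ({x} : Set X))) n
  have key : ∀ (n : ℕ) (A : Set X), A ∈ 𝓝 x →
      ∃ B, B ∈ 𝓝 x ∧ IsCompact B ∧ B ⊆ interior A ∩ U n := by
    intro n A hA
    obtain ⟨B, hB, hBsub, hBc⟩ := local_compact_nhds
      (show interior A ∩ U n ∈ 𝓝 x from
        inter_mem (interior_mem_nhds.2 hA) ((hU n).mem_nhds (hx n)))
    exact ⟨B, hB, hBc, hBsub⟩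
  choose! F hF1 hF2 hF3 using key
  obtain ⟨C, hCc, hC⟩ := exists_compact_mem_nhds x
  let V : ℕ → Set X := fun n => Nat.rec C (fun n Vn => F n Vn) n
  have hVsucc : ∀ n, V (n + 1) = F n (V n) := fun n => rfl
  have hVn : ∀ n, V n ∈ 𝓝 x ∧ IsCompact (V n) := by
    intro n
    induction n with
    | zero => exact ⟨hC, hCc⟩
    | succ n ih => exact ⟨hF1 n _ ih.1, hF2 n _ ih.1⟩
  have hVsub : ∀ n, V (n + 1) ⊆ interior (V n) ∩ U n := fun n => hF3 n _ (hVn n).1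
  have hanti : ∀ n, V (n + 1) ⊆ V n := fun n =>
    (hVsub n).trans (inter_subset_left.trans interior_subset)
  have hiInter : (⋂ n, V n) ⊆ {x} := by
    intro y hy
    rw [← hUx]
    exact mem_iInter.2 fun n =>
      ((hVsub n) (mem_iInter.1 hy (n + 1))).2
  have hbasis : (𝓝 x).HasBasis (fun _ : ℕ => True) V := by
    constructor
    intro t
    constructor
    · intro ht
      obtain ⟨W, hWt, hWo, hxW⟩ := mem_nhds_iff.1 ht
      by_contra h
      push_neg at h
      have hne : ∀ n, (V n ∩ Wᶜ).Nonempty := by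
        intro n
        rw [Set.inter_compl_nonempty_iff]
        intro hsub
        exact h n trivial (hsub.trans hWt)
      have hmain := IsCompact.nonempty_iInter_of_sequence_nonempty_isCompact_isClosed
        (fun n => V n ∩ Wᶜ)
        (fun n => inter_subset_inter_left _ (hanti n)) hne
        ((hVn 0).2.inter_right hWo.isClosed_compl)
        (fun n => ((hVn n).2.isClosed).inter hWo.isClosed_compl)
      obtain ⟨y, hy⟩ := hmain
      rw [← iInter_inter] at hy
      have : y = x := hiInter hy.1
      exact hy.2 (this ▸ hxW)
    · rintro ⟨n, -, hsub⟩
      exact mem_of_superset (hVn n).1 hsub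
  exact hbasis.isCountablyGenerated

/-- A topological group with countably generated `𝓝 1` is first countable. -/
lemma aux_firstCountable_of_nhds_one
    {G : Type*} [Group G] [TopologicalSpace G] [IsTopologicalGroup G]
    (h : (𝓝 (1 : G)).IsCountablyGenerated) : FirstCountableTopology G := by
  constructor
  intro a
  rw [← nhds_translation_mul_inv a]
  exact Filter.comap.isCountablyGenerated _ _

/-- A σ-compact first countable topological group is second countable. -/
lemma aux_secondCountable_of_sigmaCompact_firstCountable
    {G : Type*} [Group G] [TopologicalSpace G] [IsTopologicalGroup G]
    [SigmaCompactSpace G] [FirstCountableTopology G] :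
    SecondCountableTopology G := by
  letI u : UniformSpace G := IsTopologicalGroup.rightUniformSpace G
  haveI : (𝓤 G).IsCountablyGenerated := by
    rw [uniformity_eq_comap_nhds_one']
    exact Filter.comap.isCountablyGenerated _ _
  haveI : TopologicalSpace.PseudoMetrizableSpace G :=
    UniformSpace.pseudoMetrizableSpace
  letI := TopologicalSpace.pseudoMetrizableSpacePseudoMetric G
  exact EMetric.secondCountable_of_sigmaCompact G

/-- For a locally compact Hausdorff topological group `G`, the following are
equivalent: (i) `G` is second countable; (ii) `G` is σ-compact and first countable;
(iii) `G \ {1}` is σ-compact, i.e. a countable union of compact subsets. -/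
theorem secondCountable_iff_sigmaCompact_firstCountable_iff_compl_one_sigmaCompact
    {G : Type*} [Group G] [TopologicalSpace G] [IsTopologicalGroup G]
    [LocallyCompactSpace G] [T2Space G] :
    (SecondCountableTopology G ↔
      (SigmaCompactSpace G ∧ FirstCountableTopology G)) ∧
    (SecondCountableTopology G ↔
      ∃ K : ℕ → Set G, (∀ n, IsCompact (K n)) ∧ (⋃ n, K n) = {(1 : G)}ᶜ) := by
  have h12 : SecondCountableTopology G → SigmaCompactSpace G ∧ FirstCountableTopology G := by
    intro h
    haveI := h
    exact ⟨inferInstance, inferInstance⟩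
  have h21 : (SigmaCompactSpace G ∧ FirstCountableTopology G) → SecondCountableTopology G := by
    rintro ⟨hσ, hf⟩
    haveI := hσ; haveI := hf
    exact aux_secondCountable_of_sigmaCompact_firstCountable
  have h13 : SecondCountableTopology G →
      ∃ K : ℕ → Set G, (∀ n, IsCompact (K n)) ∧ (⋃ n, K n) = {(1 : G)}ᶜ := by
    intro h
    haveI := h
    have hs : IsOpen ({(1 : G)}ᶜ : Set G) := isOpen_compl_singleton
    haveI : LocallyCompactSpace ({(1 : G)}ᶜ : Set G) := hs.locallyCompactSpace
    haveI : SigmaCompactSpace ({(1 : G)}ᶜ : Set G) := inferInstance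
    refine ⟨fun n => (↑) '' compactCovering ({(1 : G)}ᶜ : Set G) n,
      fun n => (isCompact_compactCovering _ n).image continuous_subtype_val, ?_⟩
    rw [← image_iUnion, iUnion_compactCovering, image_univ, Subtype.range_coe]
  have h31 : (∃ K : ℕ → Set G, (∀ n, IsCompact (K n)) ∧ (⋃ n, K n) = {(1 : G)}ᶜ) →
      SecondCountableTopology G := by
    rintro ⟨K, hKc, hKU⟩
    have hσ : SigmaCompactSpace G := by
      refine ⟨⟨fun n => K n ∪ {1}, fun n => (hKc n).union isCompact_singleton, ?_⟩⟩
      rw [iUnion_union_distrib, hKU, iUnion_const, compl_union_self]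
    have hfc : FirstCountableTopology G := by
      apply aux_firstCountable_of_nhds_one
      apply aux_countablyGenerated_nhds_of_iInter_eq_singleton
        (U := fun n => (K n)ᶜ) (fun n => (hKc n).isClosed.isOpen_compl)
      rw [← compl_iUnion, hKU, compl_compl]
    exact h21 ⟨hσ, hfc⟩
  exact ⟨⟨h12, h21⟩, ⟨h13, fun h => h31 h⟩⟩
end

section
/- Let G be a second countable locally compact Hausdorff topological group. Then G is residually compact if and only if there exists a sequence (G_n)_{n∈ℕ} of closed cocompact subgroups of G with ⋂_{n∈ℕ} G_n = {1_G}. -/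
open Pointwise

/-- A subgroup `H` of a topological group `G` is *cocompact* if there is a compact set
`K ⊆ G` with `G = K * H`. -/
def IsCocompactSubgroup {G : Type*} [Group G] [TopologicalSpace G] (H : Subgroup G) : Prop :=
  ∃ K : Set G, IsCompact K ∧ K * (H : Set G) = Set.univ

/-- A topological group `G` is *residually compact* if every `g ≠ 1` lies outside some
closed cocompact subgroup of `G`. -/
def ResiduallyCompactGroup (G : Type*) [Group G] [TopologicalSpace G] : Prop :=
  ∀ g : G, g ≠ 1 → ∃ H : Subgroup G, IsClosed (H : Set G) ∧ IsCocompactSubgroup H ∧ g ∉ H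

lemma top_isCocompact {G : Type*} [Group G] [TopologicalSpace G] :
    IsCocompactSubgroup (⊤ : Subgroup G) := by
  refine ⟨{1}, isCompact_singleton, ?_⟩
  ext x
  simp [Set.mem_mul]

/-- A second countable locally compact Hausdorff group `G` is residually
compact iff there is a sequence `(Gₙ)` of closed cocompact subgroups with `⋂ₙ Gₙ = {1}`. -/
theorem residuallyCompact_iff_exists_approximation
    {G : Type*} [Group G] [TopologicalSpace G] [IsTopologicalGroup G]
    [LocallyCompactSpace G] [T2Space G] [SecondCountableTopology G] :
    ResiduallyCompactGroup G ↔
      ∃ Gseq : ℕ → Subgroup G,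
        (∀ n, IsClosed ((Gseq n : Set G)) ∧ IsCocompactSubgroup (Gseq n)) ∧
        (⋂ n, ((Gseq n) : Set G)) = {1} := by
  constructor
  · intro h
    by_cases htriv : ∀ g : G, g = 1
    · refine ⟨fun _ => ⊤, fun n => ⟨isClosed_univ, top_isCocompact⟩, ?_⟩
      ext x
      simp [htriv x]
    · push_neg at htriv
      obtain ⟨g₀, hg₀⟩ := htriv
      set ι := {g : G // g ≠ 1}
      choose H hclosed hcocompact hnotmem using fun i : ι => h i.1 i.2
      have hopen : ∀ i : ι, IsOpen ((H i : Set G)ᶜ) := fun i => (hclosed i).isOpen_compl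
      obtain ⟨T, hTc, hTeq⟩ := TopologicalSpace.isOpen_iUnion_countable
        (fun i : ι => (H i : Set G)ᶜ) hopen
      have hTne : T.Nonempty := by
        by_contra hne
        rw [Set.not_nonempty_iff_eq_empty] at hne
        have : (g₀ : G) ∈ ⋃ i : ι, (H i : Set G)ᶜ :=
          Set.mem_iUnion.2 ⟨⟨g₀, hg₀⟩, hnotmem ⟨g₀, hg₀⟩⟩
        rw [← hTeq, hne] at this
        simp at this
      obtain ⟨f, hf⟩ := Set.Countable.exists_eq_range hTc hTne
      refine ⟨fun n => H (f n), fun n => ⟨hclosed _, hcocompact _⟩, ?_⟩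
      apply Set.Subset.antisymm
      · intro x hx
        simp only [Set.mem_iInter, SetLike.mem_coe] at hx
        simp only [Set.mem_singleton_iff]
        by_contra hx1
        have : x ∈ ⋃ i ∈ T, (H i : Set G)ᶜ := by
          rw [hTeq]
          exact Set.mem_iUnion.2 ⟨⟨x, hx1⟩, hnotmem ⟨x, hx1⟩⟩
        obtain ⟨i, hiT, hi⟩ := Set.mem_iUnion₂.1 this
        rw [hf] at hiT
        obtain ⟨n, rfl⟩ := hiT
        exact hi (hx n)
      · intro x hx
        simp only [Set.mem_singleton_iff] at hx
        subst hx
        exact Set.mem_iInter.2 fun n => (H (f n)).one_mem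
  · rintro ⟨Gseq, h1, h2⟩ g hg
    have : g ∉ ⋂ n, ((Gseq n) : Set G) := by
      rw [h2]; simpa using hg
    obtain ⟨n, hn⟩ := by simpa [Set.mem_iInter] using this
    exact ⟨Gseq n, (h1 n).1, (h1 n).2, hn⟩
end

section
/- Let G be a locally compact Hausdorff topological group and let H be a closed cocompact subgroup of G. If H, regarded as a topological group with the subspace topology, is residually compact, then G is residually compact. -/
open Pointwise

/-- If a closed cocompact subgroup `H` of a locally compact Hausdorff group
`G` is residually compact (in the subspace topology), then so is `G`. -/
theorem residuallyCompact_of_closed_cocompact_subgroup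
    {G : Type*} [Group G] [TopologicalSpace G] [IsTopologicalGroup G]
    [LocallyCompactSpace G] [T2Space G]
    (H : Subgroup G) (hclosed : IsClosed (H : Set G)) (hcc : IsCocompactSubgroup H)
    (hres : ResiduallyCompactGroup ↥H) :
    ResiduallyCompactGroup G := by
  intro g hg
  by_cases hgH : g ∈ H
  · obtain ⟨L, hLclosed, ⟨KH, hKHc, hKH⟩, hgL⟩ :=
      hres ⟨g, hgH⟩ (fun h => hg (by simpa using congrArg Subtype.val h))
    obtain ⟨K, hKc, hK⟩ := hcc
    refine ⟨L.map H.subtype, ?_, ⟨K * (Subtype.val '' KH),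
      hKc.mul (hKHc.image continuous_subtype_val), ?_⟩, ?_⟩
    · have := hclosed.isClosedEmbedding_subtypeVal.isClosedMap _ hLclosed
      rw [Subgroup.coe_map, Subgroup.coe_subtype]; exact this
    · apply Set.eq_univ_of_forall
      intro x
      have hx : x ∈ K * (H : Set G) := hK ▸ Set.mem_univ x
      obtain ⟨k, hk, h, hh, rfl⟩ := hx
      have hmem : (⟨h, hh⟩ : ↥H) ∈ KH * (L : Set ↥H) := hKH ▸ Set.mem_univ _
      obtain ⟨kh, hkh, l, hl, hmul⟩ := hmem
      have hmul' : (kh : G) * (l : G) = h := congrArg Subtype.val hmul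
      refine ⟨k * (kh : G), ⟨k, hk, (kh : G), Set.mem_image_of_mem _ hkh, rfl⟩,
        (l : G), ?_, ?_⟩
      · exact ⟨l, hl, rfl⟩
      · show k * (kh:G) * (l:G) = k * h
        rw [mul_assoc, hmul']
    · intro hmem
      obtain ⟨x, hx, hxe⟩ := hmem
      apply hgL
      have hxg : x = ⟨g, hgH⟩ := Subtype.ext hxe
      rwa [hxg] at hx
  · exact ⟨H, hclosed, hcc, hgH⟩
end

section
/- Let G be a σ-compact, residually compact, locally compact Hausdorff topological group and let H be an open normal cocompact subgroup of G. Then H, regarded as a topological group with the subspace topology, is residually compact. -/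
open Pointwise

/-- An open normal cocompact subgroup of a σ-compact, residually compact,
locally compact Hausdorff group is itself residually compact (in the subspace topology). -/
theorem residuallyCompact_open_normal_cocompact_subgroup
    {G : Type*} [Group G] [TopologicalSpace G] [IsTopologicalGroup G]
    [LocallyCompactSpace G] [T2Space G] [SigmaCompactSpace G]
    (hres : ResiduallyCompactGroup G)
    (H : Subgroup G) (hopen : IsOpen (H : Set G)) (hnormal : H.Normal)
    (hcc : IsCocompactSubgroup H) :
    ResiduallyCompactGroup ↥H := by
  classical
  intro g hg
  have hg' : (g : G) ≠ 1 := fun h => hg (Subtype.ext h)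
  obtain ⟨L, hLclosed, ⟨K, hKcomp, hKL⟩, hgL⟩ := hres (g : G) hg'
  obtain ⟨K₀, hK₀comp, hK₀H⟩ := hcc
  have hHclosed : IsClosed (H : Set G) := Subgroup.isClosed_of_isOpen H hopen
  -- finite subcover of K₀ by cosets of H
  obtain ⟨s, hs⟩ := hK₀comp.elim_finite_subcover (fun i : G => i • (H : Set G))
    (fun i => hopen.smul i)
    (fun k hk => Set.mem_iUnion.2 ⟨k, Set.mem_smul_set_iff_inv_smul_mem.2
      (by simpa using H.one_mem)⟩)
  -- every element of G lies in some coset i • H with i ∈ s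
  have hGcov : ∀ x : G, ∃ i ∈ s, x ∈ i • (H : Set G) := by
    intro x
    have hx : x ∈ K₀ * (H : Set G) := hK₀H ▸ Set.mem_univ x
    obtain ⟨k, hk, h, hh, rfl⟩ := hx
    obtain ⟨i, hi, hki⟩ := Set.mem_iUnion₂.1 (hs hk)
    refine ⟨i, hi, ?_⟩
    rw [Set.mem_smul_set_iff_inv_smul_mem] at hki ⊢
    have := H.mul_mem hki hh
    simpa [mul_assoc] using this
  -- a finite transversal for L ∩ H inside L
  set T : Set G := (fun i : G =>
      if h : ∃ x, x ∈ (L : Set G) ∩ i • (H : Set G) then h.choose else 1) '' ↑s with hT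
  have hTfin : T.Finite := s.finite_toSet.image _
  have hLcov : (L : Set G) ⊆ T * ((L : Set G) ∩ (H : Set G)) := by
    intro l hl
    obtain ⟨i, hi, hli⟩ := hGcov l
    have hex : ∃ x, x ∈ (L : Set G) ∩ i • (H : Set G) := ⟨l, hl, hli⟩
    set σ := hex.choose with hσ
    have hσmem : σ ∈ (L : Set G) ∩ i • (H : Set G) := hex.choose_spec
    have hσT : σ ∈ T := ⟨i, hi, by exact dif_pos hex⟩
    have h1 : i⁻¹ * σ ∈ H := by
      simpa using Set.mem_smul_set_iff_inv_smul_mem.1 hσmem.2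
    have h2 : i⁻¹ * l ∈ H := by
      simpa using Set.mem_smul_set_iff_inv_smul_mem.1 hli
    have hmem : σ⁻¹ * l ∈ H := by
      have := H.mul_mem (H.inv_mem h1) h2
      simpa [mul_assoc] using this
    exact ⟨σ, hσT, σ⁻¹ * l, ⟨L.mul_mem (L.inv_mem hσmem.1) hl, hmem⟩,
      by simp [mul_assoc]⟩
  -- L ∩ H is cocompact in G with compact part K * T
  have hcoc : (K * T) * ((L : Set G) ∩ (H : Set G)) = Set.univ := by
    apply Set.eq_univ_of_univ_subset
    intro x _
    have hx : x ∈ K * (L : Set G) := hKL ▸ Set.mem_univ x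
    obtain ⟨k, hk, l, hl, rfl⟩ := hx
    obtain ⟨t, ht, m, hm, rfl⟩ := hLcov hl
    exact ⟨k * t, ⟨k, hk, t, ht, rfl⟩, m, hm, by simp [mul_assoc]⟩
  refine ⟨L.subgroupOf H, ?_, ?_, ?_⟩
  · exact IsClosed.preimage continuous_subtype_val hLclosed
  · refine ⟨Subtype.val ⁻¹' (K * T), ?_, ?_⟩
    · rw [Topology.IsEmbedding.subtypeVal.isCompact_iff]
      have himg : Subtype.val '' (Subtype.val ⁻¹' (K * T) : Set ↥H)
          = (K * T) ∩ (H : Set G) := by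
        rw [Set.image_preimage_eq_inter_range, Subtype.range_coe]
      rw [himg]
      exact ((hKcomp.mul hTfin.isCompact).inter_right hHclosed)
    · apply Set.eq_univ_of_univ_subset
      intro x _
      have hx : (x : G) ∈ (K * T) * ((L : Set G) ∩ (H : Set G)) :=
        hcoc ▸ Set.mem_univ _
      obtain ⟨c, hc, m, hm, heq⟩ := hx
      have hmH : m ∈ H := hm.2
      have hcH : c ∈ H := by
        have hc' : c = (x : G) * m⁻¹ := by rw [← heq]; group
        rw [hc']
        exact H.mul_mem x.2 (H.inv_mem hmH)
      exact ⟨⟨c, hcH⟩, hc, ⟨m, hmH⟩, hm.1, Subtype.ext heq⟩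
  · intro hmem
    exact hgL ((Subgroup.mem_subgroupOf).1 hmem)
end

section
/- Let G be a second countable locally compact Hausdorff topological group and let d₁ and d₂ be two proper, right-invariant, compatible metrics on G. Then there exists a monotonically increasing function ρ : [0,∞) → [0,∞) with ρ(t) → ∞ as t → ∞ such that d₂(g,h) ≤ ρ(d₁(g,h)) for all g, h ∈ G. Consequently, the identity map is a coarse equivalence between (G,d₁) and (G,d₂): there exist nondecreasing functions ρ₋, ρ₊ : [0,∞) → [0,∞) with ρ₋(t) → ∞ and ρ₊(t) → ∞ as t → ∞ such that ρ₋(d₁(g,h)) ≤ d₂(g,h) ≤ ρ₊(d₁(g,h)) for all g, h ∈ G. -/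
open Filter

/-- A *proper, right-invariant, compatible metric* on a topological group `G`: a metric
(given by its distance function) that is right-invariant, has compact closed balls, and
induces the topology of `G`. -/
structure PRICMetric (G : Type*) [Group G] [TopologicalSpace G] where
  d : G → G → ℝ
  d_self : ∀ x, d x x = 0
  eq_of_d_eq_zero : ∀ x y, d x y = 0 → x = y
  d_symm : ∀ x y, d x y = d y x
  d_triangle : ∀ x y z, d x z ≤ d x y + d y z
  right_invariant : ∀ g₁ g₂ h, d (g₁ * h) (g₂ * h) = d g₁ g₂
  proper : ∀ x r, IsCompact {y | d x y ≤ r}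
  compatible : ∀ s : Set G, IsOpen s ↔ ∀ x ∈ s, ∃ ε > 0, {y | d x y < ε} ⊆ s

namespace PRICMetric

variable {G : Type*} [Group G] [TopologicalSpace G] (d : PRICMetric G)

lemma d_nonneg (x y : G) : 0 ≤ d.d x y := by
  have h := d.d_triangle x y x
  rw [d.d_self, d.d_symm y x] at h
  linarith

lemma isOpen_ball (x : G) (ε : ℝ) : IsOpen {y | d.d x y < ε} := by
  rw [d.compatible]
  intro z hz
  simp only [Set.mem_setOf_eq] at hz
  refine ⟨ε - d.d x z, by linarith, fun y hy => ?_⟩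
  simp only [Set.mem_setOf_eq] at hy ⊢
  have := d.d_triangle x z y
  linarith

lemma continuous_d (x : G) : Continuous (d.d x) := by
  rw [continuous_iff_continuousAt]
  intro g
  rw [ContinuousAt, Metric.tendsto_nhds]
  intro ε hε
  have hmem : {y | d.d g y < ε} ∈ nhds g :=
    (d.isOpen_ball g ε).mem_nhds (by simpa [d.d_self] using hε)
  filter_upwards [hmem] with y hy
  rw [Real.dist_eq, abs_lt]
  have h1 := d.d_triangle x g y
  have h2 := d.d_triangle x y g
  rw [d.d_symm y g] at h2
  constructor <;> linarith

lemma d_one_mul_inv (g h : G) : d.d 1 (g * h⁻¹) = d.d g h := by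
  rw [d.d_symm]
  have := d.right_invariant g h h⁻¹
  rwa [mul_inv_cancel] at this

/-- The key construction: an upper control function. -/
lemma exists_upper {G : Type*} [Group G] [TopologicalSpace G] (d₁ d₂ : PRICMetric G) :
    ∃ σ : ℝ → ℝ, (∀ t, 0 ≤ σ t) ∧ Monotone σ ∧ (∀ t, max t 0 ≤ σ t) ∧
      ∀ g h : G, d₂.d g h ≤ σ (d₁.d g h) := by
  set f : ℝ → ℝ := fun t => sSup (d₂.d 1 '' {g | d₁.d 1 g ≤ t}) with hf
  have hbdd : ∀ t, BddAbove (d₂.d 1 '' {g | d₁.d 1 g ≤ t}) := fun t =>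
    (d₁.proper 1 t).bddAbove_image (d₂.continuous_d 1).continuousOn
  have hf_nonneg : ∀ t, 0 ≤ f t := by
    intro t
    rcases Set.eq_empty_or_nonempty {g | d₁.d 1 g ≤ t} with he | ⟨g, hg⟩
    · simp [hf, he, Real.sSup_empty]
    · exact le_trans (d₂.d_nonneg 1 g) (le_csSup (hbdd t) ⟨g, hg, rfl⟩)
  have hf_mono : Monotone f := by
    intro s t hst
    rcases Set.eq_empty_or_nonempty {g | d₁.d 1 g ≤ s} with he | hne
    · simp only [hf, he, Set.image_empty, Real.sSup_empty]
      exact hf_nonneg t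
    · exact csSup_le_csSup (hbdd t) (hne.image _)
        (Set.image_mono (fun g hg => le_trans hg hst))
  refine ⟨fun t => f t + max t 0, fun t => add_nonneg (hf_nonneg t) (le_max_right t 0), ?_, ?_, ?_⟩
  · exact hf_mono.add (monotone_id.max monotone_const)
  · intro t
    show max t 0 ≤ f t + max t 0
    have := hf_nonneg t
    linarith
  · intro g h
    have h1 : d₂.d g h ≤ f (d₁.d g h) := by
      have hmem : d₂.d g h ∈ d₂.d 1 '' {x | d₁.d 1 x ≤ d₁.d g h} :=
        ⟨g * h⁻¹, by simp [d₁.d_one_mul_inv g h], d₂.d_one_mul_inv g h⟩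
      exact le_csSup (hbdd _) hmem
    have h2 : (0:ℝ) ≤ max (d₁.d g h) 0 := le_max_right _ 0
    show d₂.d g h ≤ f (d₁.d g h) + max (d₁.d g h) 0
    linarith

end PRICMetric

/-- Any two proper right-invariant compatible metrics on a second countable
locally compact Hausdorff group are related by a monotone function tending to infinity;
consequently the identity map is a coarse equivalence between them. -/
theorem pricMetrics_coarsely_equivalent
    {G : Type*} [Group G] [TopologicalSpace G] [IsTopologicalGroup G]
    [LocallyCompactSpace G] [T2Space G] [SecondCountableTopology G]
    (d₁ d₂ : PRICMetric G) :
    (∃ ρ : ℝ → ℝ, (∀ t, 0 ≤ t → 0 ≤ ρ t) ∧ Monotone ρ ∧ Tendsto ρ atTop atTop ∧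
      ∀ g h : G, d₂.d g h ≤ ρ (d₁.d g h)) ∧
    (∃ ρlo ρhi : ℝ → ℝ, (∀ t, 0 ≤ t → 0 ≤ ρlo t) ∧ (∀ t, 0 ≤ t → 0 ≤ ρhi t) ∧
      Monotone ρlo ∧ Monotone ρhi ∧
      Tendsto ρlo atTop atTop ∧ Tendsto ρhi atTop atTop ∧
      ∀ g h : G, ρlo (d₁.d g h) ≤ d₂.d g h ∧ d₂.d g h ≤ ρhi (d₁.d g h)) := by
  obtain ⟨ρhi, hρhi_nonneg, hρhi_mono, hρhi_ge, hρhi_bound⟩ := PRICMetric.exists_upper d₁ d₂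
  obtain ⟨σ, hσ_nonneg, hσ_mono, hσ_ge, hσ_bound⟩ := PRICMetric.exists_upper d₂ d₁
  have hρhi_tendsto : Tendsto ρhi atTop atTop :=
    tendsto_atTop_mono (fun t => le_trans (le_max_left t 0) (hρhi_ge t)) tendsto_id
  -- lower control function: generalized inverse of σ
  set S : ℝ → Set ℝ := fun t => {s | 0 ≤ s ∧ t ≤ σ s} with hS
  have hS_ne : ∀ t, (S t).Nonempty := by
    intro t
    exact ⟨max t 0, le_max_right t 0, le_trans (le_trans (le_max_left t 0)
      (le_max_left (max t 0) 0)) (hσ_ge (max t 0))⟩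
  have hS_bdd : ∀ t, BddBelow (S t) := fun t => ⟨0, fun s hs => hs.1⟩
  set ρlo : ℝ → ℝ := fun t => sInf (S t) with hρlo
  have hρlo_nonneg : ∀ t, 0 ≤ ρlo t := fun t => le_csInf (hS_ne t) (fun s hs => hs.1)
  have hρlo_mono : Monotone ρlo := by
    intro s t hst
    exact csInf_le_csInf (hS_bdd s) (hS_ne t) (fun x hx => ⟨hx.1, le_trans hst hx.2⟩)
  have hρlo_tendsto : Tendsto ρlo atTop atTop := by
    rw [tendsto_atTop]
    intro M
    filter_upwards [eventually_ge_atTop (σ (max M 0) + 1)] with t ht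
    have : max M 0 ≤ ρlo t := by
      apply le_csInf (hS_ne t)
      intro s hs
      by_contra hcon
      push_neg at hcon
      have : σ s ≤ σ (max M 0) := hσ_mono hcon.le
      linarith [hs.2]
    exact le_trans (le_max_left M 0) this
  have hρlo_bound : ∀ g h : G, ρlo (d₁.d g h) ≤ d₂.d g h := by
    intro g h
    exact csInf_le (hS_bdd _) ⟨d₂.d_nonneg g h, hσ_bound g h⟩
  exact ⟨⟨ρhi, fun t _ => hρhi_nonneg t, hρhi_mono, hρhi_tendsto, hρhi_bound⟩,
    ⟨ρlo, ρhi, fun t _ => hρlo_nonneg t, fun t _ => hρhi_nonneg t, hρlo_mono, hρhi_mono,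
      hρlo_tendsto, hρhi_tendsto, fun g h => ⟨hρlo_bound g h, hρhi_bound g h⟩⟩⟩
end

section
/- Let G be a second countable locally compact Hausdorff residually compact group with a residually compact approximation (G_n)_{n∈ℕ}, and let d¹ and d² be two proper, right-invariant, compatible metrics on G. For each n let d¹_n and d²_n denote the induced quotient metrics on the coset space G/G_n. Then there exists a monotonically increasing function ρ : [0,∞) → [0,∞) with ρ(t) → ∞ as t → ∞ such that d²_n(x,y) ≤ ρ(d¹_n(x,y)) for every n ∈ ℕ and all x, y ∈ G/G_n. -/
open Filter Pointwise

/-- The quotient metric on `G/H` induced by a metric on `G`, expressed on coset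
representatives: `d'(g₁H, g₂H) = inf {d(g₁h₁, g₂h₂) : h₁, h₂ ∈ H}`. -/
noncomputable def quotDist {G : Type*} [Group G] [TopologicalSpace G]
    (M : PRICMetric G) (H : Subgroup G) (g₁ g₂ : G) : ℝ :=
  sInf {r | ∃ h₁ ∈ H, ∃ h₂ ∈ H, r = M.d (g₁ * h₁) (g₂ * h₂)}

lemma PRICMetric.d_nonneg_s8 {G : Type*} [Group G] [TopologicalSpace G] (M : PRICMetric G)
    (x y : G) : 0 ≤ M.d x y := by
  have h := M.d_triangle x y x
  rw [M.d_self, M.d_symm y x] at h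
  linarith

lemma PRICMetric.continuous_d_s8 {G : Type*} [Group G] [TopologicalSpace G] (M : PRICMetric G)
    (x : G) : Continuous fun g => M.d x g := by
  rw [continuous_iff_continuousAt]
  intro g₀
  rw [ContinuousAt, Metric.tendsto_nhds]
  intro ε hε
  have hopen : IsOpen {y | M.d g₀ y < ε} := by
    rw [M.compatible]
    intro y hy
    simp only [Set.mem_setOf_eq] at hy
    refine ⟨ε - M.d g₀ y, by linarith, fun z hz => ?_⟩
    have := M.d_triangle g₀ y z
    simp only [Set.mem_setOf_eq] at *
    linarith
  have hmem : {y | M.d g₀ y < ε} ∈ nhds g₀ :=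
    hopen.mem_nhds (by simpa [M.d_self] using hε)
  filter_upwards [hmem] with y hy
  rw [Real.dist_eq, abs_sub_lt_iff]
  have h1 := M.d_triangle x g₀ y
  have h2 := M.d_triangle x y g₀
  have h3 : M.d y g₀ = M.d g₀ y := M.d_symm y g₀
  constructor <;> linarith

/-- Given two proper right-invariant compatible metrics `d¹, d²` on a second
countable locally compact Hausdorff residually compact group `G` with residually compact
approximation `(Gₙ)`, there is one monotone function `ρ` tending to infinity controlling all
the induced quotient metrics simultaneously: `d²ₙ(x,y) ≤ ρ(d¹ₙ(x,y))` for all `n` and all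
cosets `x, y ∈ G/Gₙ`. -/
theorem quotient_metrics_uniformly_controlled
    {G : Type*} [Group G] [TopologicalSpace G] [IsTopologicalGroup G]
    [LocallyCompactSpace G] [T2Space G] [SecondCountableTopology G]
    (Gseq : ℕ → Subgroup G)
    (hclosed : ∀ n, IsClosed ((Gseq n : Set G)))
    (hcc : ∀ n, IsCocompactSubgroup (Gseq n))
    (hinter : (⋂ n, ((Gseq n) : Set G)) = {1})
    (d₁ d₂ : PRICMetric G) :
    ∃ ρ : ℝ → ℝ, (∀ t, 0 ≤ t → 0 ≤ ρ t) ∧ Monotone ρ ∧ Tendsto ρ atTop atTop ∧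
      ∀ (n : ℕ) (g₁ g₂ : G),
        quotDist d₂ (Gseq n) g₁ g₂ ≤ ρ (quotDist d₁ (Gseq n) g₁ g₂) := by
  classical
  set σ : ℝ → ℝ := fun t => sSup ((fun g => d₂.d 1 g) '' {g | d₁.d 1 g ≤ t}) with hσdef
  have hbdd : ∀ t, BddAbove ((fun g => d₂.d 1 g) '' {g : G | d₁.d 1 g ≤ t}) := fun t =>
    ((d₁.proper 1 t).image (d₂.continuous_d_s8 1)).bddAbove
  have hmem1 : ∀ t, 0 ≤ t → (1 : G) ∈ {g : G | d₁.d 1 g ≤ t} := fun t ht => by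
    simpa [d₁.d_self] using ht
  have hσ_nonneg : ∀ t, 0 ≤ t → 0 ≤ σ t := by
    intro t ht
    have h0 : d₂.d 1 1 ∈ (fun g => d₂.d 1 g) '' {g : G | d₁.d 1 g ≤ t} :=
      Set.mem_image_of_mem _ (hmem1 t ht)
    have := le_csSup (hbdd t) h0
    simpa [d₂.d_self] using this
  have hσ_mono : ∀ s t : ℝ, 0 ≤ s → s ≤ t → σ s ≤ σ t := by
    intro s t hs hst
    refine csSup_le_csSup (hbdd t) ⟨d₂.d 1 1, Set.mem_image_of_mem _ (hmem1 s hs)⟩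
      (Set.image_mono fun g hg => le_trans hg hst)
  have hσ_le : ∀ (g : G) (t : ℝ), d₁.d 1 g ≤ t → d₂.d 1 g ≤ σ t := fun g t hg =>
    le_csSup (hbdd t) (Set.mem_image_of_mem _ hg)
  refine ⟨fun t => σ (max t 0 + 1) + max t 0, ?_, ?_, ?_, ?_⟩
  · intro t ht
    have := hσ_nonneg (max t 0 + 1) (by positivity)
    have := le_max_right t 0
    show 0 ≤ σ (max t 0 + 1) + max t 0
    linarith
  · intro a b hab
    have h1 : max a 0 ≤ max b 0 := max_le_max hab le_rfl
    have h2 : σ (max a 0 + 1) ≤ σ (max b 0 + 1) :=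
      hσ_mono _ _ (by positivity) (by linarith)
    show σ (max a 0 + 1) + max a 0 ≤ σ (max b 0 + 1) + max b 0
    linarith
  · refine tendsto_atTop_mono (fun t => ?_) tendsto_id
    have h1 := hσ_nonneg (max t 0 + 1) (by positivity)
    have h2 := le_max_left t 0
    show id t ≤ σ (max t 0 + 1) + max t 0
    simp only [id]
    linarith
  · intro n g₁ g₂
    set H := Gseq n
    set S₁ : Set ℝ := {r | ∃ h₁ ∈ H, ∃ h₂ ∈ H, r = d₁.d (g₁ * h₁) (g₂ * h₂)} with hS₁
    set S₂ : Set ℝ := {r | ∃ h₁ ∈ H, ∃ h₂ ∈ H, r = d₂.d (g₁ * h₁) (g₂ * h₂)} with hS₂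
    have hne₁ : S₁.Nonempty := ⟨d₁.d (g₁ * 1) (g₂ * 1), 1, H.one_mem, 1, H.one_mem, rfl⟩
    have hbdd₁ : BddBelow S₁ := ⟨0, by rintro r ⟨h₁, -, h₂, -, rfl⟩; exact d₁.d_nonneg_s8 _ _⟩
    have hbdd₂ : BddBelow S₂ := ⟨0, by rintro r ⟨h₁, -, h₂, -, rfl⟩; exact d₂.d_nonneg_s8 _ _⟩
    have hq₁ : quotDist d₁ H g₁ g₂ = sInf S₁ := rfl
    have hq₁nonneg : 0 ≤ sInf S₁ :=
      le_csInf hne₁ (by rintro r ⟨h₁, -, h₂, -, rfl⟩; exact d₁.d_nonneg_s8 _ _)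
    obtain ⟨r, hrS, hrlt⟩ : ∃ r ∈ S₁, r < sInf S₁ + 1 :=
      exists_lt_of_csInf_lt hne₁ (by linarith)
    obtain ⟨h₁, hh₁, h₂, hh₂, rfl⟩ := hrS
    set a := g₁ * h₁
    set b := g₂ * h₂
    set g := a * b⁻¹ with hg
    have e₁ : d₁.d a b = d₁.d 1 g := by
      have := d₁.right_invariant g 1 b
      rw [d₁.d_symm 1 g]
      simpa [hg, inv_mul_cancel_right] using this
    have e₂ : d₂.d a b = d₂.d 1 g := by
      have := d₂.right_invariant g 1 b
      rw [d₂.d_symm 1 g]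
      simpa [hg, inv_mul_cancel_right] using this
    have hmax : max (sInf S₁) 0 = sInf S₁ := max_eq_left hq₁nonneg
    have hstep : d₂.d 1 g ≤ σ (max (sInf S₁) 0 + 1) := by
      refine hσ_le g _ ?_
      rw [← e₁, hmax]
      linarith
    have hquot₂ : quotDist d₂ H g₁ g₂ ≤ d₂.d a b :=
      csInf_le hbdd₂ ⟨h₁, hh₁, h₂, hh₂, rfl⟩
    rw [hq₁]
    calc quotDist d₂ H g₁ g₂ ≤ d₂.d a b := hquot₂
      _ = d₂.d 1 g := e₂
      _ ≤ σ (max (sInf S₁) 0 + 1) := hstep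
      _ ≤ σ (max (sInf S₁) 0 + 1) + max (sInf S₁) 0 := by
          have := le_max_right (sInf S₁) 0; linarith
end

section
/- Let G be a locally compact Hausdorff topological group and let σ = (G_n)_{n∈ℕ} be a decreasing residually compact approximation of G consisting of discrete normal cocompact subgroups, i.e. each G_n is a closed, discrete, normal, cocompact subgroup, G_{n+1} ⊆ G_n for all n, and ⋂_n G_n = {1_G}. Then σ is regular: for every compact subset F ⊆ G there exists n ∈ ℕ such that F⁻¹F ∩ G_n = {1_G} (equivalently, by normality, F⁻¹F ∩ ⋃_{k∈G} k G_n k⁻¹ = {1_G}). -/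
open Pointwise

/-- A decreasing residually compact approximation consisting of discrete
normal cocompact subgroups is regular: for every compact `F ⊆ G` there is `n` with
`F⁻¹F ∩ Gₙ` trivial. -/
theorem regular_of_decreasing_discrete_normal_approximation
    {G : Type*} [Group G] [TopologicalSpace G] [IsTopologicalGroup G]
    [LocallyCompactSpace G] [T2Space G]
    (Gseq : ℕ → Subgroup G)
    (hclosed : ∀ n, IsClosed ((Gseq n : Set G)))
    (hdiscrete : ∀ n, DiscreteTopology ↥(Gseq n))
    (hnormal : ∀ n, (Gseq n).Normal)
    (hcc : ∀ n, IsCocompactSubgroup (Gseq n))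
    (hdec : ∀ n, Gseq (n + 1) ≤ Gseq n)
    (hinter : (⋂ n, ((Gseq n) : Set G)) = {1}) :
    ∀ F : Set G, IsCompact F → ∃ n, (F⁻¹ * F) ∩ (Gseq n : Set G) ⊆ {1} := by
  intro F hF
  set C : Set G := F⁻¹ * F with hC
  have hCcomp : IsCompact C := hF.inv.mul hF
  -- T n = (C ∩ Gseq n) \ {1}
  set T : ℕ → Set G := fun n => (C ∩ (Gseq n : Set G)) \ {1} with hT
  have hTfin : ∀ n, (T n).Finite := by
    intro n
    have hcomp : IsCompact (C ∩ (Gseq n : Set G)) := hCcomp.inter_right (hclosed n)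
    have hdisc : DiscreteTopology ↥(C ∩ (Gseq n : Set G)) := by
      have h1 : DiscreteTopology ↥((Gseq n : Set G)) := hdiscrete n
      exact DiscreteTopology.of_subset h1 Set.inter_subset_right
    exact (hcomp.finite (isDiscrete_iff_discreteTopology.mpr hdisc)).subset Set.diff_subset
  have hTanti : ∀ m n, m ≤ n → T n ⊆ T m := by
    intro m n hmn
    have : (Gseq n : Set G) ⊆ (Gseq m : Set G) := by
      have : Gseq n ≤ Gseq m := by
        induction hmn with
        | refl => exact le_rfl
        | step h ih => exact le_trans (hdec _) ih
      exact this
    exact Set.diff_subset_diff_left (Set.inter_subset_inter_right _ this)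
  have hTint : (⋂ n, T n) = ∅ := by
    apply Set.eq_empty_iff_forall_notMem.mpr
    intro x hx
    have hx1 : x ∈ ⋂ n, ((Gseq n) : Set G) := by
      simp only [Set.mem_iInter] at hx ⊢
      intro n; exact (hx n).1.2
    rw [hinter] at hx1
    exact (Set.mem_iInter.mp hx 0).2 hx1
  -- for every x in T 0, there is n with x ∉ T n
  have hex : ∀ x ∈ T 0, ∃ n, x ∉ T n := by
    intro x hx
    by_contra h
    push_neg at h
    have : x ∈ ⋂ n, T n := Set.mem_iInter.mpr h
    rw [hTint] at this
    exact this
  classical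
  obtain ⟨f, hf⟩ := Classical.axiomOfChoice
    (fun x : T 0 => hex x.1 x.2)
  have hfin := hTfin 0
  rcases (hfin.toFinset.image fun x => if hx : x ∈ T 0 then f ⟨x, hx⟩ else 0).exists_le with ⟨N, hN⟩
  refine ⟨N, ?_⟩
  intro x hx
  by_contra hx1
  have hxT : x ∈ T N := ⟨hx, hx1⟩
  have hx0 : x ∈ T 0 := hTanti 0 N (Nat.zero_le N) hxT
  have hle : f ⟨x, hx0⟩ ≤ N := by
    have hmem : x ∈ hfin.toFinset := hfin.mem_toFinset.mpr hx0
    have := hN _ (Finset.mem_image_of_mem _ hmem)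
    simpa [hx0] using this
  exact hf ⟨x, hx0⟩ (hTanti _ _ hle hxT)
end

section
/- Let X be a metric space equipped with a right action of a group H acting by isometries, let Y be the orbit space X/H with the induced pseudometric d_Y(π(x), π(y)) = inf_{h∈H} d(x, y·h), and let π : X → Y be the canonical projection. Let x ∈ X and R > 0 be such that π is injective when restricted to the open ball B_{3R}(x). Then π restricted to B_R(x) is an isometry from B_R(x) onto the ball B_R(π(x)) in Y; that is, d_Y(π(u), π(v)) = d(u, v) for all u, v ∈ B_R(x), and π(B_R(x)) = B_R(π(x)). -/
/-- Let `X` be a metric space with a right action of a group `H` by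
isometries, let `d_Y` denote the induced pseudometric on the orbit space (expressed here on
points of `X`), and let `π` be the orbit projection. If `π` is injective on the open ball
`B_{3R}(x)`, then `π` restricted to `B_R(x)` is an isometry onto the ball `B_R(π(x))`:
`d_Y(π(u), π(v)) = d(u,v)` for `u, v ∈ B_R(x)`, and `π(B_R(x)) = B_R(π(x))`. -/
theorem quotient_projection_isometry_on_small_ball
    {X : Type*} [MetricSpace X] {H : Type*} [Group H]
    (act : X → H → X)
    (act_one : ∀ x, act x 1 = x)
    (act_mul : ∀ x h₁ h₂, act (act x h₁) h₂ = act x (h₁ * h₂))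
    (act_isometry : ∀ x y h, dist (act x h) (act y h) = dist x y)
    (dY : X → X → ℝ)
    (hdY : ∀ x y, dY x y = sInf {r | ∃ h : H, r = dist x (act y h)})
    (x : X) (R : ℝ) (hR : 0 < R)
    (hinj : ∀ u ∈ Metric.ball x (3 * R), ∀ v ∈ Metric.ball x (3 * R),
      (∃ h : H, act u h = v) → u = v) :
    (∀ u ∈ Metric.ball x R, ∀ v ∈ Metric.ball x R, dY u v = dist u v) ∧
    (∀ v : X, dY x v < R → ∃ h : H, act v h ∈ Metric.ball x R) := by
  constructor
  · intro u hu v hv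
    rw [hdY]
    have hne : {r | ∃ h : H, r = dist u (act v h)}.Nonempty :=
      ⟨dist u (act v 1), 1, rfl⟩
    have hbdd : BddBelow {r | ∃ h : H, r = dist u (act v h)} := by
      refine ⟨0, fun r hr => ?_⟩
      obtain ⟨h, rfl⟩ := hr
      exact dist_nonneg
    refine le_antisymm ?_ (le_csInf hne ?_)
    · have : dist u v ∈ {r | ∃ h : H, r = dist u (act v h)} :=
        ⟨1, by rw [act_one]⟩
      exact csInf_le hbdd this
    · rintro r ⟨h, rfl⟩
      by_contra hlt
      push_neg at hlt
      have huv : dist u v < 2 * R := by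
        calc dist u v ≤ dist u x + dist x v := dist_triangle _ _ _
          _ < R + R := add_lt_add (Metric.mem_ball.mp hu) (by
              rw [dist_comm]; exact Metric.mem_ball.mp hv)
          _ = 2 * R := by ring
      have hmem : act v h ∈ Metric.ball x (3 * R) := by
        rw [Metric.mem_ball, dist_comm]
        calc dist x (act v h) ≤ dist x u + dist u (act v h) := dist_triangle _ _ _
          _ < R + 2 * R := add_lt_add (by rw [dist_comm]; exact Metric.mem_ball.mp hu)
              (hlt.trans huv)
          _ = 3 * R := by ring
      have hv3 : v ∈ Metric.ball x (3 * R) := by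
        have := Metric.mem_ball.mp hv
        rw [Metric.mem_ball]
        nlinarith
      have := hinj v hv3 (act v h) hmem ⟨h, rfl⟩
      rw [← this] at hlt
      exact absurd hlt (lt_irrefl _)
  · intro v hv
    rw [hdY] at hv
    have hne : {r | ∃ h : H, r = dist x (act v h)}.Nonempty :=
      ⟨dist x (act v 1), 1, rfl⟩
    obtain ⟨r, ⟨h, rfl⟩, hr⟩ := exists_lt_of_csInf_lt hne hv
    exact ⟨h, by rw [Metric.mem_ball, dist_comm]; exact hr⟩
end

section
/- Let G be a second countable locally compact Hausdorff residually compact group equipped with a proper, right-invariant, compatible metric d, and let σ = (G_n)_{n∈ℕ} be a regular residually compact approximation of G. For each n let d_n be the quotient metric on G/G_n, and let d^B be a box metric on the disjoint union X = ⨆_{n∈ℕ} G/G_n. Let s ∈ ℕ, and suppose the metric space (X, d^B) has asymptotic dimension at most s: for every R > 0 there exist B > 0 and families 𝒱⁰, …, 𝒱ˢ of subsets of X such that every member of 𝒱⁰ ∪ … ∪ 𝒱ˢ has diameter at most B, every subset of X of diameter at most R is contained in some member, and any two distinct members of each 𝒱ˡ lie at distance greater than R. Then for every ε > 0 and every compact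 subset M ⊆ G there exist n ∈ ℕ and continuous compactly supported functions μ₀, …, μ_s : G → [0,1] such that: (a) supp(μ_l) ∩ supp(μ_l)·h = ∅ for every l ∈ {0,…,s} and every h ∈ G_n \ {1_G}; (b) ∑_{l=0}^{s} ∑_{h∈G_n} μ_l(gh) = 1 for every g ∈ G (by (a), for each l and g at most one term of the inner sum is nonzero); (c) sup_{h∈G} |μ_l(h) − μ_l(gh)| ≤ ε for every l ∈ {0,…,s} and every g ∈ M. -/
open Pointwise

/-- A *box metric* on the disjoint union `⨆ₙ G/Gₙ`: a metric restricting to the quotient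
metric on each `G/Gₙ`, with `d^B(G/Gₙ, G/Gₘ) → ∞` as `n + m → ∞`, `n ≠ m`. -/
def IsBoxMetric {G : Type*} [Group G] [TopologicalSpace G] (M : PRICMetric G)
    (Gseq : ℕ → Subgroup G)
    (dB : ((n : ℕ) × (G ⧸ Gseq n)) → ((n : ℕ) × (G ⧸ Gseq n)) → ℝ) : Prop :=
  (∀ x, dB x x = 0) ∧ (∀ x y, dB x y = dB y x) ∧
  (∀ x y z, dB x z ≤ dB x y + dB y z) ∧
  (∀ (n : ℕ) (g₁ g₂ : G),
    dB ⟨n, QuotientGroup.mk g₁⟩ ⟨n, QuotientGroup.mk g₂⟩ = quotDist M (Gseq n) g₁ g₂) ∧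
  (∀ R : ℝ, ∃ N : ℕ, ∀ m n : ℕ, m ≠ n → N ≤ m + n →
    ∀ (x : G ⧸ Gseq m) (y : G ⧸ Gseq n), R ≤ dB ⟨m, x⟩ ⟨n, y⟩)

section Aux
variable {G : Type*} [Group G] [TopologicalSpace G] (dG : PRICMetric G)

lemma PRIC.nonneg (x y : G) : 0 ≤ dG.d x y := by
  have h1 := dG.d_triangle x y x
  have h2 := dG.d_symm y x
  have h3 := dG.d_self x
  linarith

lemma PRIC.abs_sub (k a b : G) : |dG.d k a - dG.d k b| ≤ dG.d a b := by
  rw [abs_sub_le_iff]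
  constructor
  · have := dG.d_triangle k b a
    have := dG.d_symm b a
    linarith
  · have := dG.d_triangle k a b
    linarith

lemma PRIC.isOpen_ball (x : G) (t : ℝ) : IsOpen {y | dG.d x y < t} := by
  rw [dG.compatible]
  intro y hy
  refine ⟨t - dG.d x y, by simpa using hy, fun z hz => ?_⟩
  have := dG.d_triangle x y z
  simp only [Set.mem_setOf_eq] at *
  linarith

lemma PRIC.cont_of_lip (f : G → ℝ) (K : ℝ) (hf : ∀ a b, |f a - f b| ≤ K * dG.d a b) :
    Continuous f := by
  refine continuous_iff_continuousAt.2 fun g => ?_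
  rw [ContinuousAt, Metric.tendsto_nhds]
  intro ε' hε'
  have hδ : 0 < ε' / (|K| + 1) := by positivity
  have hball : {y | dG.d g y < ε' / (|K| + 1)} ∈ nhds g :=
    (PRIC.isOpen_ball dG g _).mem_nhds (by simp [dG.d_self, hδ])
  filter_upwards [hball] with y hy
  rw [Real.dist_eq]
  have h1 : dG.d y g < ε' / (|K| + 1) := by rw [dG.d_symm]; exact hy
  have h2 := hf y g
  have h3 : K * dG.d y g ≤ |K| * dG.d y g :=
    mul_le_mul_of_nonneg_right (le_abs_self K) (PRIC.nonneg dG y g)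
  have h4 : |K| * dG.d y g ≤ |K| * (ε' / (|K| + 1)) :=
    mul_le_mul_of_nonneg_left (le_of_lt h1) (abs_nonneg K)
  have h5 : |K| * (ε' / (|K| + 1)) < (|K| + 1) * (ε' / (|K| + 1)) :=
    mul_lt_mul_of_pos_right (lt_add_one |K|) hδ
  have h6 : (|K| + 1) * (ε' / (|K| + 1)) = ε' := by
    field_simp
  linarith

lemma PRIC.cont_d (k : G) : Continuous (fun g => dG.d k g) :=
  PRIC.cont_of_lip dG _ 1 (fun a b => by simpa using PRIC.abs_sub dG k a b)

lemma PRIC.quotDist_le (H : Subgroup G) (g₁ g₂ : G) :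
    quotDist dG H g₁ g₂ ≤ dG.d g₁ g₂ := by
  apply csInf_le
  · exact ⟨0, fun t ⟨h₁, _, h₂, _, ht⟩ => ht ▸ PRIC.nonneg dG _ _⟩
  · exact ⟨1, H.one_mem, 1, H.one_mem, by simp⟩

lemma PRIC.quotDist_lt (H : Subgroup G) (g₁ g₂ : G) (c : ℝ)
    (h : quotDist dG H g₁ g₂ < c) : ∃ h₀ ∈ H, dG.d g₁ (g₂ * h₀) < c := by
  have hne : Set.Nonempty {r | ∃ h₁ ∈ H, ∃ h₂ ∈ H, r = dG.d (g₁ * h₁) (g₂ * h₂)} :=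
    ⟨dG.d g₁ g₂, 1, H.one_mem, 1, H.one_mem, by simp⟩
  obtain ⟨t, ⟨h₁, hh₁, h₂, hh₂, rfl⟩, ht⟩ := exists_lt_of_csInf_lt hne h
  refine ⟨h₂ * h₁⁻¹, mul_mem hh₂ (inv_mem hh₁), ?_⟩
  have hri := dG.right_invariant (g₁ * h₁) (g₂ * h₂) h₁⁻¹
  rw [mul_inv_cancel_right, mul_assoc] at hri
  rw [← hri] at ht
  exact ht

lemma clamp_helper (a b : ℝ) (h : a ≤ b) :
    max 0 (min 1 a) ≤ max 0 (min 1 b) ∧ max 0 (min 1 b) - max 0 (min 1 a) ≤ b - a := by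
  constructor <;> (simp only [max_def, min_def]; split_ifs <;> linarith)

lemma clamp_lip (a b : ℝ) : |max 0 (min 1 a) - max 0 (min 1 b)| ≤ |a - b| := by
  rcases le_total a b with h | h
  · obtain ⟨h1, h2⟩ := clamp_helper a b h
    rw [abs_sub_comm, abs_of_nonneg (by linarith), abs_sub_comm, abs_of_nonneg (by linarith)]
    exact h2
  · obtain ⟨h1, h2⟩ := clamp_helper b a h
    rw [abs_of_nonneg (by linarith), abs_of_nonneg (by linarith)]
    exact h2

lemma div_sub_div_bound (p q a b D rr s' : ℝ) (hp : 0 ≤ p) (hpa : p ≤ a) (hq : 0 ≤ q)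
    (hqb : q ≤ b) (hra : rr ≤ a) (hrb : rr ≤ b) (hr : 0 < rr) (hD : |p - q| ≤ D)
    (hab : |a - b| ≤ s' * D) (hs' : 0 ≤ s') : |p / a - q / b| ≤ (s' + 1) * D / rr := by
  have ha : 0 < a := lt_of_lt_of_le hr hra
  have hb : 0 < b := lt_of_lt_of_le hr hrb
  have hD0 : 0 ≤ D := le_trans (abs_nonneg _) hD
  rw [div_sub_div _ _ (ne_of_gt ha) (ne_of_gt hb), abs_div, abs_of_pos (mul_pos ha hb)]
  rw [div_le_div_iff₀ (mul_pos ha hb) hr]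
  have key : |p * b - q * a| ≤ b * ((s' + 1) * D) := by
    have : p * b - q * a = (p - q) * b + q * (b - a) := by ring
    rw [this]
    calc |(p - q) * b + q * (b - a)| ≤ |(p - q) * b| + |q * (b - a)| := abs_add_le _ _
      _ = |p - q| * b + q * |b - a| := by
          rw [abs_mul, abs_mul, abs_of_pos hb, abs_of_nonneg hq]
      _ ≤ D * b + b * (s' * D) := by
          have h1 : |p - q| * b ≤ D * b := mul_le_mul_of_nonneg_right hD (le_of_lt hb)
          have h2 : q * |b - a| ≤ b * (s' * D) := by
            rw [abs_sub_comm]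
            exact mul_le_mul hqb hab (abs_nonneg _) (le_of_lt hb)
          linarith
      _ = b * ((s' + 1) * D) := by ring
  calc |p * b - a * q| * rr ≤ (b * ((s' + 1) * D)) * rr :=
        mul_le_mul_of_nonneg_right (by rw [mul_comm a q]; exact key) (le_of_lt hr)
    _ ≤ (b * ((s' + 1) * D)) * a := by
        apply mul_le_mul_of_nonneg_left hra
        positivity
    _ = (s' + 1) * D * (a * b) := by ring

lemma abs_mul_sub_bound (a a' b b' : ℝ) (ha' : |a'| ≤ 1) (hb : |b| ≤ 1) :
    |a * b - a' * b'| ≤ |a - a'| + |b - b'| := by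
  have : a * b - a' * b' = (a - a') * b + a' * (b - b') := by ring
  rw [this]
  calc |(a - a') * b + a' * (b - b')| ≤ |(a - a') * b| + |a' * (b - b')| := abs_add_le _ _
    _ = |a - a'| * |b| + |a'| * |b - b'| := by rw [abs_mul, abs_mul]
    _ ≤ |a - a'| + |b - b'| := by
        nlinarith [abs_nonneg (a - a'), abs_nonneg (b - b'), abs_nonneg a', abs_nonneg b]

end Aux



/-- If the box space of a regular residually compact approximation `(Gₙ)`
of `G` has asymptotic dimension at most `s`, then for every `ε > 0` and compact `M ⊆ G` there
are `n` and continuous compactly supported `μ₀, …, μ_s : G → [0,1]` whose supports are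
`Gₙ`-disjoint, whose `Gₙ`-translates over all `l` form a partition of unity, and which are
`ε`-invariant under left translation by elements of `M`. -/
theorem partition_of_unity_of_finite_asdim_box_space
    {G : Type*} [Group G] [TopologicalSpace G] [IsTopologicalGroup G]
    [LocallyCompactSpace G] [T2Space G] [SecondCountableTopology G]
    (dG : PRICMetric G)
    (Gseq : ℕ → Subgroup G)
    (hclosed : ∀ n, IsClosed ((Gseq n : Set G)))
    (hcc : ∀ n, IsCocompactSubgroup (Gseq n))
    (hinter : (⋂ n, ((Gseq n) : Set G)) = {1})
    (hreg : ∀ F : Set G, IsCompact F → ∃ n, ∀ k : G,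
      Set.InjOn (QuotientGroup.mk : G → G ⧸ Gseq n) ((fun x => x * k) '' F))
    (dB : ((n : ℕ) × (G ⧸ Gseq n)) → ((n : ℕ) × (G ⧸ Gseq n)) → ℝ)
    (hdB : IsBoxMetric dG Gseq dB)
    (s : ℕ)
    (hasdim : ∀ R : ℝ, 0 < R → ∃ B : ℝ, 0 < B ∧
      ∃ V : Fin (s + 1) → Set (Set ((n : ℕ) × (G ⧸ Gseq n))),
        (∀ l, ∀ U ∈ V l, ∀ x ∈ U, ∀ y ∈ U, dB x y ≤ B) ∧
        (∀ S : Set ((n : ℕ) × (G ⧸ Gseq n)), (∀ x ∈ S, ∀ y ∈ S, dB x y ≤ R) →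
          ∃ l, ∃ U ∈ V l, S ⊆ U) ∧
        (∀ l, ∀ U ∈ V l, ∀ U' ∈ V l, U ≠ U' → ∀ x ∈ U, ∀ y ∈ U', R < dB x y)) :
    ∀ ε : ℝ, 0 < ε → ∀ M : Set G, IsCompact M →
      ∃ n : ℕ, ∃ μ : Fin (s + 1) → G → ℝ,
        (∀ l, Continuous (μ l)) ∧
        (∀ l, HasCompactSupport (μ l)) ∧
        (∀ l g, μ l g ∈ Set.Icc (0 : ℝ) 1) ∧
        (∀ l, ∀ h ∈ Gseq n, h ≠ 1 →
          Disjoint (tsupport (μ l)) ((fun g => g * h) '' tsupport (μ l))) ∧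
        (∀ g : G, ∑ l : Fin (s + 1), ∑' h : (Gseq n), μ l (g * (h : G)) = 1) ∧
        (∀ l, ∀ g ∈ M, ∀ h : G, |μ l h - μ l (g * h)| ≤ ε) := by
  intro ε hε M hM
  classical
  obtain ⟨dB0, dBsymm, dBtri, dBquot, -⟩ := hdB
  have dBnn : ∀ x y, 0 ≤ dB x y := by
    intro x y
    have h1 := dBtri x y x
    have h2 := dBsymm y x
    have h3 := dB0 x
    linarith
  -- a bound for the displacement of M
  have hCex : ∃ C : ℝ, 1 ≤ C ∧ ∀ g ∈ M, dG.d 1 g ≤ C := by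
    have hcov : M ⊆ ⋃ i : ℕ, {y | dG.d 1 y < i} := by
      intro g _
      obtain ⟨i, hi⟩ := exists_nat_gt (dG.d 1 g)
      exact Set.mem_iUnion.2 ⟨i, hi⟩
    obtain ⟨t, ht⟩ := hM.elim_finite_subcover _ (fun i : ℕ => PRIC.isOpen_ball dG 1 i) hcov
    refine ⟨max 1 ((t.sup id : ℕ) : ℝ), le_max_left _ _, fun g hg => ?_⟩
    obtain ⟨i, hit, hi⟩ := Set.mem_iUnion₂.1 (ht hg)
    have hle : (i : ℝ) ≤ ((t.sup id : ℕ) : ℝ) := Nat.cast_le.2 (Finset.le_sup (f := id) hit)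
    have : dG.d 1 g < (i : ℝ) := hi
    calc dG.d 1 g ≤ (i : ℝ) := le_of_lt this
      _ ≤ ((t.sup id : ℕ) : ℝ) := hle
      _ ≤ max 1 ((t.sup id : ℕ) : ℝ) := le_max_right _ _
  obtain ⟨C, hC1, hCM⟩ := hCex
  have hC0 : (0 : ℝ) < C := lt_of_lt_of_le one_pos hC1
  set r : ℝ := 8 * ((s : ℝ) + 2) * C / ε with hr_def
  have hr : 0 < r := by positivity
  set T : ℝ := 8 * C / ε with hT_def
  have hT : 0 < T := by positivity
  set R : ℝ := 4 * r with hR_def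
  obtain ⟨B, hB, V, hVdiam, hVcover, hVsep⟩ := hasdim R (by positivity)
  set B' : ℝ := B + 2 * r + 1 with hB'_def
  set Rad : ℝ := B' + T with hRad_def
  have hB'Rad : B' ≤ Rad := by rw [hRad_def]; linarith
  obtain ⟨n, hinjreg⟩ := hreg {y | dG.d 1 y ≤ Rad} (dG.proper 1 Rad)
  refine ⟨n, ?_⟩
  have hInj : ∀ k x y : G, dG.d k x ≤ Rad → dG.d k y ≤ Rad →
      (QuotientGroup.mk x : G ⧸ Gseq n) = QuotientGroup.mk y → x = y := by
    intro k x y hx hy hxy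
    have hmem : ∀ z : G, dG.d k z ≤ Rad → z ∈ (fun x => x * k) '' {y | dG.d 1 y ≤ Rad} := by
      intro z hz
      refine ⟨z * k⁻¹, ?_, by simp⟩
      have hri := dG.right_invariant 1 (z * k⁻¹) k
      rw [one_mul, inv_mul_cancel_right] at hri
      show dG.d 1 (z * k⁻¹) ≤ Rad
      rw [← hri]
      exact hz
    exact hinjreg k (hmem x hx) (hmem y hy) hxy
  -- the embedding of G into the box space at level n
  set xm : G → ((m : ℕ) × (G ⧸ Gseq m)) := fun g => ⟨n, QuotientGroup.mk g⟩ with hxm_def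
  have hxm_mul : ∀ (g h : G), h ∈ Gseq n → xm (g * h) = xm g := by
    intro g h hh
    simp only [hxm_def]
    exact congrArg (fun q => (⟨n, q⟩ : (m : ℕ) × (G ⧸ Gseq m)))
      (QuotientGroup.mk_mul_of_mem g hh)
  have hxm_le : ∀ g g' : G, dB (xm g) (xm g') ≤ dG.d g g' := by
    intro g g'
    simp only [hxm_def]
    rw [dBquot n g g']
    exact PRIC.quotDist_le dG _ g g'
  -- distance to a subset of the box space
  set DU : Set ((m : ℕ) × (G ⧸ Gseq m)) → ((m : ℕ) × (G ⧸ Gseq m)) → ℝ :=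
    fun U x => sInf ((dB x) '' U) with hDU_def
  have hDU_bdd : ∀ U x, BddBelow ((dB x) '' U) := by
    rintro U x
    exact ⟨0, by rintro t ⟨y, hy, rfl⟩; exact dBnn x y⟩
  have hDU_nonneg : ∀ U x, 0 ≤ DU U x := by
    intro U x
    apply Real.sInf_nonneg
    rintro t ⟨y, hy, rfl⟩
    exact dBnn x y
  have hDU_le : ∀ U x y, y ∈ U → DU U x ≤ dB x y := by
    intro U x y hy
    exact csInf_le (hDU_bdd U x) ⟨y, hy, rfl⟩
  have hDU_exists : ∀ U x (cc : ℝ), U.Nonempty → DU U x < cc → ∃ y ∈ U, dB x y < cc := by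
    intro U x cc hU h
    obtain ⟨t, ⟨y, hy, rfl⟩, htc⟩ := exists_lt_of_csInf_lt (hU.image _) h
    exact ⟨y, hy, htc⟩
  have hDU_lip : ∀ U x y, U.Nonempty → DU U x ≤ DU U y + dB x y := by
    intro U x y hU
    have key : DU U x - dB x y ≤ DU U y := by
      apply le_csInf (hU.image _)
      rintro t ⟨u, hu, rfl⟩
      have h1 := hDU_le U x u hu
      have h2 := dBtri x y u
      linarith
    linarith
  -- bump functions on the box space
  set φ : Set ((m : ℕ) × (G ⧸ Gseq m)) → ((m : ℕ) × (G ⧸ Gseq m)) → ℝ :=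
    fun U x => max 0 (r - DU U x) with hφ_def
  have hφ_nonneg : ∀ U x, 0 ≤ φ U x := fun U x => le_max_left _ _
  have hφ_pos : ∀ U x, (0 < φ U x ↔ DU U x < r) := by
    intro U x
    constructor
    · intro h
      by_contra hc
      push_neg at hc
      have h0 : φ U x = 0 := max_eq_left (by linarith)
      linarith
    · intro h
      calc (0:ℝ) < r - DU U x := by linarith
        _ ≤ φ U x := le_max_right _ _
  have hφ_ne : ∀ U x, φ U x ≠ 0 → DU U x < r := by
    intro U x h
    exact (hφ_pos U x).1 (lt_of_le_of_ne (hφ_nonneg U x) (Ne.symm h))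
  have hφ_lip : ∀ U x y, U.Nonempty → φ U x ≤ φ U y + dB x y := by
    intro U x y hU
    have h1 := hDU_lip U y x hU
    have h1b := dBsymm y x
    have h2 : r - DU U y ≤ φ U y := le_max_right _ _
    have h3 : 0 ≤ φ U y := hφ_nonneg U y
    have h4 := dBnn x y
    apply max_le
    · linarith
    · linarith
  have hφ_abs : ∀ U x y, U.Nonempty → |φ U x - φ U y| ≤ dB x y := by
    intro U x y hU
    rw [abs_sub_le_iff]
    constructor
    · have := hφ_lip U x y hU; linarith
    · have := hφ_lip U y x hU
      have hs := dBsymm y x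
      linarith
  -- the active families
  set A : Fin (s+1) → Set (Set ((m : ℕ) × (G ⧸ Gseq m))) :=
    fun l => {U | U ∈ V l ∧ U.Nonempty ∧ ∃ g : G, DU U (xm g) < r} with hA_def
  have hsep2 : ∀ (l : Fin (s+1)) U U', U ∈ A l → U' ∈ A l → U ≠ U' →
      ∀ x, DU U x ≤ r → DU U' x ≤ r → False := by
    intro l U U' hU hU' hne x h1 h2
    obtain ⟨u, hu, hu2⟩ := hDU_exists U x (r + r) hU.2.1 (lt_of_le_of_lt h1 (by linarith))
    obtain ⟨u', hu', hu'2⟩ := hDU_exists U' x (r + r) hU'.2.1 (lt_of_le_of_lt h2 (by linarith))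
    have h3 := dBtri u x u'
    have h4 := dBsymm x u
    have h5 := hVsep l U hU.1 U' hU'.1 hne u hu u' hu'
    rw [hR_def] at h5
    linarith
  have hfin : ∀ l, (A l).Finite := by
    intro l
    obtain ⟨K, hK, hKG⟩ := hcc n
    have hwit : ∀ U : Set ((m : ℕ) × (G ⧸ Gseq m)), ∃ k : G,
        U ∈ A l → (k ∈ K ∧ DU U (xm k) < r) := by
      intro U
      by_cases hU : U ∈ A l
      · obtain ⟨g, hg⟩ := hU.2.2
        have hgmem : g ∈ K * ((Gseq n : Subgroup G) : Set G) := by rw [hKG]; trivial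
        obtain ⟨k, hk, h, hh, hkh⟩ := Set.mem_mul.1 hgmem
        refine ⟨k, fun _ => ⟨hk, ?_⟩⟩
        have hxx : xm g = xm k := by rw [← hkh]; exact hxm_mul k h hh
        rwa [hxx] at hg
      · exact ⟨1, fun h => absurd h hU⟩
    choose κ hκ using hwit
    have hKcov : K ⊆ ⋃ k ∈ K, {y | dG.d k y < r} := by
      intro k hk
      exact Set.mem_biUnion hk (by simp [dG.d_self, hr])
    obtain ⟨Tset, hTsub, hTfin, hTcov⟩ :=
      hK.elim_finite_subcover_image (fun k _ => PRIC.isOpen_ball dG k r) hKcov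
    have hwit2 : ∀ U : Set ((m : ℕ) × (G ⧸ Gseq m)), ∃ t : G,
        U ∈ A l → (t ∈ Tset ∧ dG.d t (κ U) < r) := by
      intro U
      by_cases hU : U ∈ A l
      · obtain ⟨t, ht, htm⟩ := Set.mem_iUnion₂.1 (hTcov (hκ U hU).1)
        exact ⟨t, fun _ => ⟨ht, htm⟩⟩
      · exact ⟨1, fun h => absurd h hU⟩
    choose τ hτ using hwit2
    apply Set.Finite.of_finite_image (f := τ)
    · apply hTfin.subset
      rintro t ⟨U, hU, rfl⟩
      exact (hτ U hU).1
    · intro U hU U' hU' heq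
      by_contra hne
      have h1 : DU U (xm (κ U)) < r := (hκ U hU).2
      have h2 : DU U' (xm (κ U')) < r := (hκ U' hU').2
      obtain ⟨u, hu, hu2⟩ := hDU_exists U _ r hU.2.1 h1
      obtain ⟨u', hu', hu'2⟩ := hDU_exists U' _ r hU'.2.1 h2
      have h5 := hVsep l U hU.1 U' hU'.1 hne u hu u' hu'
      rw [hR_def] at h5
      have h6 := dBtri u (xm (κ U)) u'
      have h7 := dBtri (xm (κ U)) (xm (κ U')) u'
      have h8 := dBsymm (xm (κ U)) u
      have h9 := dBsymm (xm (κ U')) u'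
      have h10 := hxm_le (κ U) (κ U')
      have h11 := dG.d_triangle (κ U) (τ U) (κ U')
      have h12 := dG.d_symm (τ U) (κ U)
      have h13 := (hτ U hU).2
      have h14 := (hτ U' hU').2
      rw [← heq] at h14
      linarith
  -- centers for the active sets
  have hcex : ∀ (l : Fin (s+1)) (U : Set ((m : ℕ) × (G ⧸ Gseq m))), ∃ g : G,
      U ∈ A l → DU U (xm g) < r := by
    intro l U
    by_cases hU : U ∈ A l
    · obtain ⟨g, hg⟩ := hU.2.2
      exact ⟨g, fun _ => hg⟩
    · exact ⟨1, fun h => absurd h hU⟩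
  choose c hc using hcex
  have hsheet : ∀ (l : Fin (s+1)) U, U ∈ A l → ∀ g : G, DU U (xm g) < r →
      ∃ h ∈ Gseq n, dG.d (c l U) (g * h) ≤ B' := by
    intro l U hU g hg
    obtain ⟨u, hu, hu2⟩ := hDU_exists U _ r hU.2.1 (hc l U hU)
    obtain ⟨u', hu', hu'2⟩ := hDU_exists U _ r hU.2.1 hg
    have hd1 := hVdiam l U hU.1 u hu u' hu'
    have h2 := dBtri (xm (c l U)) u (xm g)
    have h3 := dBtri u u' (xm g)
    have h4 := dBsymm (xm g) u'
    have h5 : dB (xm (c l U)) (xm g) < B' := by rw [hB'_def]; linarith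
    have h6 : quotDist dG (Gseq n) (c l U) g < B' := by
      simp only [hxm_def] at h5
      rwa [dBquot] at h5
    obtain ⟨h₀, hh₀, hlt⟩ := PRIC.quotDist_lt dG (Gseq n) (c l U) g B' h6
    exact ⟨h₀, hh₀, le_of_lt hlt⟩
  have huniq : ∀ (l : Fin (s+1)) U (g h h' : G), h ∈ Gseq n → h' ∈ Gseq n →
      dG.d (c l U) (g * h) ≤ Rad → dG.d (c l U) (g * h') ≤ Rad → h = h' := by
    intro l U g h h' hh hh' hd hd'
    have heq : g * h = g * h' := by
      apply hInj (c l U) _ _ hd hd'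
      rw [QuotientGroup.mk_mul_of_mem g hh, QuotientGroup.mk_mul_of_mem g hh']
    exact mul_left_cancel heq
  -- the cutoff function
  set β : ℝ → ℝ := fun t => max 0 (min 1 ((B' + T - t) / T)) with hβ_def
  have hβ_mem : ∀ t, 0 ≤ β t ∧ β t ≤ 1 := fun t =>
    ⟨le_max_left _ _, max_le zero_le_one (min_le_left _ _)⟩
  have hβ_one : ∀ t, t ≤ B' → β t = 1 := by
    intro t ht
    have h1 : (1:ℝ) ≤ (B' + T - t) / T := by
      rw [le_div_iff₀ hT]; linarith
    simp only [hβ_def]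
    rw [min_eq_left h1]
    exact max_eq_right zero_le_one
  have hβ_zero : ∀ t, B' + T ≤ t → β t = 0 := by
    intro t ht
    have h1 : (B' + T - t) / T ≤ 0 :=
      div_nonpos_of_nonpos_of_nonneg (by linarith) (le_of_lt hT)
    simp only [hβ_def]
    exact max_eq_left (le_trans (min_le_right _ _) h1)
  have hβ_lip : ∀ t t', |β t - β t'| ≤ |t - t'| / T := by
    intro t t'
    simp only [hβ_def]
    calc |max 0 (min 1 ((B' + T - t) / T)) - max 0 (min 1 ((B' + T - t') / T))|
        ≤ |(B' + T - t) / T - (B' + T - t') / T| := clamp_lip _ _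
      _ = |t - t'| / T := by
          have he : (B' + T - t) / T - (B' + T - t') / T = (t' - t) / T := by ring
          rw [he, abs_div, abs_of_pos hT, abs_sub_comm]
  have hβ_cont : Continuous β := by
    simp only [hβ_def]
    exact continuous_const.max (continuous_const.min
      ((continuous_const.sub continuous_id).div_const T))
  -- partition sums
  set aF : Fin (s+1) → ((m : ℕ) × (G ⧸ Gseq m)) → ℝ :=
    fun l x => ∑ U ∈ (hfin l).toFinset, φ U x with haF_def
  set AF : ((m : ℕ) × (G ⧸ Gseq m)) → ℝ := fun x => ∑ l, aF l x with hAF_def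
  have haF_nonneg : ∀ l x, 0 ≤ aF l x := fun l x =>
    Finset.sum_nonneg fun U _ => hφ_nonneg U x
  have hφ_le_aF : ∀ (l : Fin (s+1)) U x, U ∈ (hfin l).toFinset → φ U x ≤ aF l x := by
    intro l U x hUm
    exact Finset.single_le_sum (f := fun U => φ U x) (fun U _ => hφ_nonneg U x) hUm
  have haF_le_AF : ∀ (l : Fin (s+1)) x, aF l x ≤ AF x := by
    intro l x
    exact Finset.single_le_sum (f := fun l' => aF l' x) (fun l' _ => haF_nonneg l' x)
      (Finset.mem_univ l)
  have haF_lip : ∀ (l : Fin (s+1)) x y, aF l x ≤ aF l y + dB x y := by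
    intro l x y
    by_cases hz : ∀ U ∈ (hfin l).toFinset, φ U x = 0
    · have h0 : aF l x = 0 := Finset.sum_eq_zero hz
      rw [h0]
      exact add_nonneg (haF_nonneg l y) (dBnn x y)
    · push_neg at hz
      obtain ⟨U₀, hU₀m, hU₀⟩ := hz
      have hU₀A : U₀ ∈ A l := (hfin l).mem_toFinset.1 hU₀m
      have hpos : DU U₀ x < r := hφ_ne U₀ x hU₀
      have hothers : ∀ U ∈ (hfin l).toFinset, U ≠ U₀ → φ U x = 0 := by
        intro U hUm hne
        by_contra hcne
        exact hsep2 l U U₀ ((hfin l).mem_toFinset.1 hUm) hU₀A hne x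
          (le_of_lt (hφ_ne U x hcne)) (le_of_lt hpos)
      have heq : aF l x = φ U₀ x := Finset.sum_eq_single_of_mem U₀ hU₀m hothers
      rw [heq]
      calc φ U₀ x ≤ φ U₀ y + dB x y := hφ_lip U₀ x y hU₀A.2.1
        _ ≤ aF l y + dB x y := by
            have := hφ_le_aF l U₀ y hU₀m
            linarith
  have haF_abs : ∀ (l : Fin (s+1)) x y, |aF l x - aF l y| ≤ dB x y := by
    intro l x y
    rw [abs_sub_le_iff]
    refine ⟨by have := haF_lip l x y; linarith, ?_⟩
    have := haF_lip l y x
    have hs := dBsymm y x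
    linarith
  have hAF_abs : ∀ x y, |AF x - AF y| ≤ ((s : ℝ) + 1) * dB x y := by
    intro x y
    have h1 : |AF x - AF y| ≤ ∑ l : Fin (s+1), |aF l x - aF l y| := by
      have he : AF x - AF y = ∑ l : Fin (s+1), (aF l x - aF l y) := by
        rw [Finset.sum_sub_distrib]
      rw [he]
      exact Finset.abs_sum_le_sum_abs _ _
    have h2 : ∑ l : Fin (s+1), |aF l x - aF l y| ≤ ∑ _l : Fin (s+1), dB x y :=
      Finset.sum_le_sum fun l _ => haF_abs l x y
    have h3 : ∑ _l : Fin (s+1), dB x y = ((s : ℝ) + 1) * dB x y := by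
      rw [Finset.sum_const, Finset.card_univ, Fintype.card_fin, nsmul_eq_mul]
      push_cast
      ring
    linarith
  have hAF_lower : ∀ g : G, r ≤ AF (xm g) := by
    intro g
    obtain ⟨l, U, hUV, hSU⟩ := hVcover {y | dB (xm g) y ≤ r} (by
      intro x hx y hy
      simp only [Set.mem_setOf_eq] at hx hy
      have h1 := dBtri x (xm g) y
      have h2 := dBsymm (xm g) x
      rw [hR_def]
      linarith)
    have hx : xm g ∈ U := hSU (by
      show dB (xm g) (xm g) ≤ r
      rw [dB0]
      exact le_of_lt hr)
    have hDU0 : DU U (xm g) ≤ 0 := by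
      have h := hDU_le U (xm g) (xm g) hx
      rwa [dB0] at h
    have hUA : U ∈ A l := ⟨hUV, ⟨_, hx⟩, ⟨g, lt_of_le_of_lt hDU0 hr⟩⟩
    have hφr : φ U (xm g) = r := by
      have h0 : DU U (xm g) = 0 := le_antisymm hDU0 (hDU_nonneg U _)
      simp only [hφ_def, h0, sub_zero]
      exact max_eq_right (le_of_lt hr)
    have h1 := hφ_le_aF l U (xm g) ((hfin l).mem_toFinset.2 hUA)
    have h2 := haF_le_AF l (xm g)
    linarith
  have hAF_pos : ∀ g : G, 0 < AF (xm g) := fun g => lt_of_lt_of_le hr (hAF_lower g)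
  -- continuity of building blocks
  have hcontDU : ∀ U : Set ((m : ℕ) × (G ⧸ Gseq m)), U.Nonempty →
      Continuous (fun g => DU U (xm g)) := by
    intro U hU
    apply PRIC.cont_of_lip dG _ 1
    intro a b
    rw [one_mul, abs_sub_le_iff]
    constructor
    · have h1 := hDU_lip U (xm a) (xm b) hU
      have h2 := hxm_le a b
      linarith
    · have h1 := hDU_lip U (xm b) (xm a) hU
      have h2 := hxm_le b a
      have h3 := dG.d_symm b a
      linarith
  have hcontφ : ∀ U : Set ((m : ℕ) × (G ⧸ Gseq m)), U.Nonempty →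
      Continuous (fun g => φ U (xm g)) := by
    intro U hU
    simp only [hφ_def]
    exact continuous_const.max (continuous_const.sub (hcontDU U hU))
  have hcontAF : Continuous (fun g => AF (xm g)) := by
    simp only [hAF_def, haF_def]
    apply continuous_finset_sum
    intro l _
    apply continuous_finset_sum
    intro U hUm
    exact hcontφ U ((hfin l).mem_toFinset.1 hUm).2.1
  -- the functions
  set μ : Fin (s+1) → G → ℝ := fun l g =>
    ∑ U ∈ (hfin l).toFinset, (φ U (xm g) / AF (xm g)) * β (dG.d (c l U) g) with hμ_def
  have hterm_nonneg : ∀ (l : Fin (s+1)) U g,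
      0 ≤ (φ U (xm g) / AF (xm g)) * β (dG.d (c l U) g) := by
    intro l U g
    exact mul_nonneg (div_nonneg (hφ_nonneg _ _) (le_of_lt (hAF_pos g))) (hβ_mem _).1
  refine ⟨μ, ?_, ?_, ?_, ?_, ?_, ?_⟩
  · -- continuity
    intro l
    simp only [hμ_def]
    apply continuous_finset_sum
    intro U hUm
    have hUA := (hfin l).mem_toFinset.1 hUm
    exact ((hcontφ U hUA.2.1).div hcontAF (fun g => ne_of_gt (hAF_pos g))).mul
      (hβ_cont.comp (PRIC.cont_d dG (c l U)))
  · -- compact support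
    intro l
    have hsub : Function.support (μ l) ⊆
        ⋃ U ∈ (hfin l).toFinset, {g | dG.d (c l U) g ≤ Rad} := by
      intro g hg
      rw [Function.mem_support, hμ_def] at hg
      obtain ⟨U, hUm, hterm⟩ := Finset.exists_ne_zero_of_sum_ne_zero hg
      refine Set.mem_biUnion hUm ?_
      have hβne : β (dG.d (c l U) g) ≠ 0 := fun h0 => hterm (by rw [h0, mul_zero])
      by_contra hcn
      simp only [Set.mem_setOf_eq] at hcn
      push_neg at hcn
      exact hβne (hβ_zero _ (by rw [← hRad_def]; exact le_of_lt hcn))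
    have hcpt : IsCompact (⋃ U ∈ (hfin l).toFinset, {g | dG.d (c l U) g ≤ Rad}) := by
      apply Set.Finite.isCompact_biUnion (Finset.finite_toSet _)
      intro U _
      exact dG.proper (c l U) Rad
    exact HasCompactSupport.intro hcpt fun x hx => by
      by_contra h0
      exact hx (hsub (Function.mem_support.2 h0))
  · -- range in [0,1]
    intro l g
    constructor
    · simp only [hμ_def]
      exact Finset.sum_nonneg fun U _ => hterm_nonneg l U g
    · simp only [hμ_def]
      calc ∑ U ∈ (hfin l).toFinset, (φ U (xm g) / AF (xm g)) * β (dG.d (c l U) g)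
          ≤ ∑ U ∈ (hfin l).toFinset, φ U (xm g) / AF (xm g) := by
            apply Finset.sum_le_sum
            intro U _
            have hb := hβ_mem (dG.d (c l U) g)
            calc (φ U (xm g) / AF (xm g)) * β (dG.d (c l U) g)
                ≤ (φ U (xm g) / AF (xm g)) * 1 :=
                  mul_le_mul_of_nonneg_left hb.2
                    (div_nonneg (hφ_nonneg _ _) (le_of_lt (hAF_pos g)))
              _ = φ U (xm g) / AF (xm g) := mul_one _
        _ = aF l (xm g) / AF (xm g) := by rw [← Finset.sum_div]
        _ ≤ 1 := (div_le_one (hAF_pos g)).2 (haF_le_AF l (xm g))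
  · -- disjoint supports
    intro l h hh hne1
    have hDclosed : IsClosed (⋃ U ∈ (hfin l).toFinset,
        ({g : G | DU U (xm g) ≤ r} ∩ {g : G | dG.d (c l U) g ≤ Rad})) := by
      apply Set.Finite.isClosed_biUnion (Finset.finite_toSet _)
      intro U hUm
      have hUA := (hfin l).mem_toFinset.1 hUm
      exact (isClosed_Iic.preimage (hcontDU U hUA.2.1)).inter
        (isClosed_Iic.preimage (PRIC.cont_d dG (c l U)))
    have hsupp : tsupport (μ l) ⊆ ⋃ U ∈ (hfin l).toFinset,
        ({g : G | DU U (xm g) ≤ r} ∩ {g : G | dG.d (c l U) g ≤ Rad}) := by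
      apply closure_minimal _ hDclosed
      intro g hg
      rw [Function.mem_support, hμ_def] at hg
      obtain ⟨U, hUm, hterm⟩ := Finset.exists_ne_zero_of_sum_ne_zero hg
      refine Set.mem_biUnion hUm ⟨?_, ?_⟩
      · have hφne : φ U (xm g) ≠ 0 := fun h0 => hterm (by rw [h0, zero_div, zero_mul])
        exact le_of_lt (hφ_ne U (xm g) hφne)
      · have hβne : β (dG.d (c l U) g) ≠ 0 := fun h0 => hterm (by rw [h0, mul_zero])
        by_contra hcn
        simp only [Set.mem_setOf_eq] at hcn
        push_neg at hcn
        exact hβne (hβ_zero _ (by rw [← hRad_def]; exact le_of_lt hcn))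
    rw [Set.disjoint_left]
    rintro g hg ⟨g', hg', rfl⟩
    obtain ⟨U, hUm, hmem⟩ := Set.mem_iUnion₂.1 (hsupp hg)
    obtain ⟨U', hU'm, hmem'⟩ := Set.mem_iUnion₂.1 (hsupp hg')
    have hU1 : DU U (xm (g' * h)) ≤ r := hmem.1
    have hU2 : dG.d (c l U) (g' * h) ≤ Rad := hmem.2
    have hU'1 : DU U' (xm g') ≤ r := hmem'.1
    have hU'2 : dG.d (c l U') g' ≤ Rad := hmem'.2
    by_cases hUU : U = U'
    · subst hUU
      apply hne1
      have := huniq l U g' h 1 hh (Gseq n).one_mem hU2 (by rwa [mul_one])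
      exact this
    · exact hsep2 l U U' ((hfin l).mem_toFinset.1 hUm) ((hfin l).mem_toFinset.1 hU'm)
        hUU (xm g') (by rwa [hxm_mul g' h hh] at hU1) hU'1
  · -- partition of unity
    intro g
    have key : ∀ l : Fin (s+1), ∑' (h : Gseq n), μ l (g * (h : G)) =
        aF l (xm g) / AF (xm g) := by
      intro l
      have hrw : ∀ h : Gseq n, μ l (g * (h : G)) = ∑ U ∈ (hfin l).toFinset,
          (φ U (xm g) / AF (xm g)) * β (dG.d (c l U) (g * (h : G))) := by
        intro h
        simp only [hμ_def]
        rw [hxm_mul g (h : G) h.2]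
      rw [tsum_congr hrw]
      have hsummand : ∀ U ∈ (hfin l).toFinset, Summable (fun h : Gseq n =>
          (φ U (xm g) / AF (xm g)) * β (dG.d (c l U) (g * (h : G)))) := by
        intro U hUm
        by_cases hφ0 : φ U (xm g) = 0
        · simpa [hφ0] using summable_zero
        · have hUA := (hfin l).mem_toFinset.1 hUm
          obtain ⟨h₀, hh₀, hd₀⟩ := hsheet l U hUA g (hφ_ne U (xm g) hφ0)
          apply summable_of_ne_finset_zero (s := {(⟨h₀, hh₀⟩ : Gseq n)})
          intro b hb
          have hbne : (b : G) ≠ h₀ := by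
            intro hcc
            exact hb (Finset.mem_singleton.2 (Subtype.ext hcc))
          have hfar : ¬ dG.d (c l U) (g * (b : G)) ≤ Rad := by
            intro hcc
            exact hbne (huniq l U g (b : G) h₀ b.2 hh₀ hcc (le_trans hd₀ hB'Rad))
          push_neg at hfar
          rw [hβ_zero _ (by rw [← hRad_def]; exact le_of_lt hfar), mul_zero]
      rw [Summable.tsum_finsetSum hsummand]
      have hterm : ∀ U ∈ (hfin l).toFinset,
          (∑' (h : Gseq n), (φ U (xm g) / AF (xm g)) * β (dG.d (c l U) (g * (h : G)))) =
          φ U (xm g) / AF (xm g) := by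
        intro U hUm
        by_cases hφ0 : φ U (xm g) = 0
        · simp [hφ0]
        · have hUA := (hfin l).mem_toFinset.1 hUm
          obtain ⟨h₀, hh₀, hd₀⟩ := hsheet l U hUA g (hφ_ne U (xm g) hφ0)
          rw [tsum_eq_single (⟨h₀, hh₀⟩ : Gseq n) ?_]
          · rw [hβ_one _ hd₀, mul_one]
          · intro b hb
            have hbne : (b : G) ≠ h₀ := fun hcc => hb (Subtype.ext hcc)
            have hfar : ¬ dG.d (c l U) (g * (b : G)) ≤ Rad := by
              intro hcc
              exact hbne (huniq l U g (b : G) h₀ b.2 hh₀ hcc (le_trans hd₀ hB'Rad))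
            push_neg at hfar
            rw [hβ_zero _ (by rw [← hRad_def]; exact le_of_lt hfar), mul_zero]
      rw [Finset.sum_congr rfl hterm, ← Finset.sum_div]
    calc ∑ l : Fin (s+1), ∑' (h : Gseq n), μ l (g * (h : G))
        = ∑ l : Fin (s+1), aF l (xm g) / AF (xm g) :=
          Finset.sum_congr rfl fun l _ => key l
      _ = AF (xm g) / AF (xm g) := by rw [← Finset.sum_div]
      _ = 1 := div_self (ne_of_gt (hAF_pos g))
  · -- approximate invariance
    intro l g hgM h
    have hdxx' : dB (xm h) (xm (g * h)) ≤ C := by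
      have h1 := hxm_le h (g * h)
      have h2 := dG.right_invariant 1 g h
      rw [one_mul] at h2
      calc dB (xm h) (xm (g * h)) ≤ dG.d h (g * h) := h1
        _ = dG.d 1 g := h2
        _ ≤ C := hCM g hgM
    have hdgh : dG.d h (g * h) ≤ C := by
      have h2 := dG.right_invariant 1 g h
      rw [one_mul] at h2
      rw [h2]
      exact hCM g hgM
    set tfin := (hfin l).toFinset.filter
      (fun U => φ U (xm h) ≠ 0 ∨ φ U (xm (g * h)) ≠ 0) with htfin_def
    have hμh : μ l h = ∑ U ∈ tfin, (φ U (xm h) / AF (xm h)) * β (dG.d (c l U) h) := by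
      simp only [hμ_def, htfin_def]
      rw [Finset.sum_filter_of_ne]
      intro U _ hterm
      left
      intro h0
      exact hterm (by rw [h0, zero_div, zero_mul])
    have hμgh : μ l (g * h) = ∑ U ∈ tfin,
        (φ U (xm (g * h)) / AF (xm (g * h))) * β (dG.d (c l U) (g * h)) := by
      simp only [hμ_def, htfin_def]
      rw [Finset.sum_filter_of_ne]
      intro U _ hterm
      right
      intro h0
      exact hterm (by rw [h0, zero_div, zero_mul])
    have hcard : tfin.card ≤ 2 := by
      have hone : ∀ x : ((m : ℕ) × (G ⧸ Gseq m)),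
          ((hfin l).toFinset.filter (fun U => φ U x ≠ 0)).card ≤ 1 := by
        intro x
        rw [Finset.card_le_one]
        intro U hU U' hU'
        rw [Finset.mem_filter] at hU hU'
        by_contra hne
        exact hsep2 l U U' ((hfin l).mem_toFinset.1 hU.1) ((hfin l).mem_toFinset.1 hU'.1)
          hne x (le_of_lt (hφ_ne U x hU.2)) (le_of_lt (hφ_ne U' x hU'.2))
      have hsub : tfin ⊆ (hfin l).toFinset.filter (fun U => φ U (xm h) ≠ 0) ∪
          (hfin l).toFinset.filter (fun U => φ U (xm (g * h)) ≠ 0) := by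
        intro U hU
        simp only [htfin_def, Finset.mem_filter, Finset.mem_union] at *
        tauto
      calc tfin.card ≤ _ := Finset.card_le_card hsub
        _ ≤ _ + _ := Finset.card_union_le _ _
        _ ≤ 2 := by
            have := hone (xm h)
            have := hone (xm (g * h))
            omega
    have htermb : ∀ U ∈ tfin,
        |(φ U (xm h) / AF (xm h)) * β (dG.d (c l U) h) -
          (φ U (xm (g * h)) / AF (xm (g * h))) * β (dG.d (c l U) (g * h))| ≤
        ((s : ℝ) + 2) * C / r + C / T := by
      intro U hUm
      rw [htfin_def, Finset.mem_filter] at hUm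
      have hUA : U ∈ A l := (hfin l).mem_toFinset.1 hUm.1
      have hUmt : U ∈ (hfin l).toFinset := hUm.1
      have hb1 : |φ U (xm h) / AF (xm h) - φ U (xm (g * h)) / AF (xm (g * h))| ≤
          (((s : ℝ) + 1) + 1) * dB (xm h) (xm (g * h)) / r := by
        apply div_sub_div_bound
        · exact hφ_nonneg U _
        · exact le_trans (hφ_le_aF l U _ hUmt) (haF_le_AF l _)
        · exact hφ_nonneg U _
        · exact le_trans (hφ_le_aF l U _ hUmt) (haF_le_AF l _)
        · exact hAF_lower h
        · exact hAF_lower (g * h)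
        · exact hr
        · exact hφ_abs U _ _ hUA.2.1
        · exact hAF_abs _ _
        · positivity
      have hb1' : (((s : ℝ) + 1) + 1) * dB (xm h) (xm (g * h)) / r ≤
          ((s : ℝ) + 2) * C / r := by
        apply (div_le_div_iff_of_pos_right hr).2
        have hp : (0:ℝ) ≤ (s : ℝ) + 2 := by positivity
        calc (((s : ℝ) + 1) + 1) * dB (xm h) (xm (g * h))
            = ((s : ℝ) + 2) * dB (xm h) (xm (g * h)) := by ring
          _ ≤ ((s : ℝ) + 2) * C := mul_le_mul_of_nonneg_left hdxx' hp
      have hb2 : |β (dG.d (c l U) h) - β (dG.d (c l U) (g * h))| ≤ C / T := by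
        calc |β (dG.d (c l U) h) - β (dG.d (c l U) (g * h))|
            ≤ |dG.d (c l U) h - dG.d (c l U) (g * h)| / T := hβ_lip _ _
          _ ≤ C / T := by
              apply (div_le_div_iff_of_pos_right hT).2
              exact le_trans (PRIC.abs_sub dG (c l U) h (g * h)) hdgh
      have habs1 : |φ U (xm (g * h)) / AF (xm (g * h))| ≤ 1 := by
        rw [abs_of_nonneg (div_nonneg (hφ_nonneg _ _) (le_of_lt (hAF_pos (g * h))))]
        exact (div_le_one (hAF_pos (g * h))).2
          (le_trans (hφ_le_aF l U _ hUmt) (haF_le_AF l _))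
      have habs2 : |β (dG.d (c l U) h)| ≤ 1 := by
        rw [abs_of_nonneg (hβ_mem _).1]
        exact (hβ_mem _).2
      calc |(φ U (xm h) / AF (xm h)) * β (dG.d (c l U) h) -
          (φ U (xm (g * h)) / AF (xm (g * h))) * β (dG.d (c l U) (g * h))|
          ≤ |φ U (xm h) / AF (xm h) - φ U (xm (g * h)) / AF (xm (g * h))| +
            |β (dG.d (c l U) h) - β (dG.d (c l U) (g * h))| :=
            abs_mul_sub_bound _ _ _ _ habs1 habs2
        _ ≤ ((s : ℝ) + 2) * C / r + C / T := add_le_add (le_trans hb1 hb1') hb2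
    calc |μ l h - μ l (g * h)|
        = |∑ U ∈ tfin, ((φ U (xm h) / AF (xm h)) * β (dG.d (c l U) h) -
            (φ U (xm (g * h)) / AF (xm (g * h))) * β (dG.d (c l U) (g * h)))| := by
          rw [hμh, hμgh, Finset.sum_sub_distrib]
      _ ≤ ∑ U ∈ tfin, |(φ U (xm h) / AF (xm h)) * β (dG.d (c l U) h) -
            (φ U (xm (g * h)) / AF (xm (g * h))) * β (dG.d (c l U) (g * h))| :=
          Finset.abs_sum_le_sum_abs _ _
      _ ≤ tfin.card • (((s : ℝ) + 2) * C / r + C / T) :=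
          Finset.sum_le_card_nsmul _ _ _ htermb
      _ ≤ 2 * (((s : ℝ) + 2) * C / r + C / T) := by
          rw [nsmul_eq_mul]
          apply mul_le_mul_of_nonneg_right _ (by positivity)
          exact_mod_cast hcard
      _ ≤ ε := by
          have hs2 : ((s : ℝ) + 2) ≠ 0 := by positivity
          have e1 : ((s : ℝ) + 2) * C / r = ε / 8 := by
            rw [hr_def]
            field_simp
          have e2 : C / T = ε / 8 := by
            rw [hT_def]
            field_simp
          rw [e1, e2]
          linarith
end

section
/- Let G be a second countable locally compact Hausdorff residually compact group equipped with a proper, right-invariant, compatible metric d, let σ = (G_n)_{n∈ℕ} be a regular residually compact approximation of G, and let d^B be a box metric on X = ⨆_{n∈ℕ} G/G_n. Let s ∈ ℕ and suppose (X, d^B) has asymptotic dimension at most s: for every R > 0 there exist B > 0 and families 𝒱⁰, …, 𝒱ˢ of subsets of X whose members have diameter at most B, such that every subset of X of diameter at most R is contained in some member and any two distinct members of each 𝒱ˡ lie at distance greater than R. Then the metric space (G, d) has asymptotic dimension at most s: for every R > 0 there exist B' > 0 and families 𝒰⁰, …, 𝒰ˢ of subsets of G whose members have diameter at most B', such that every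 subset of G of diameter at most R is contained in some member of 𝒰⁰ ∪ … ∪ 𝒰ˢ and any two distinct members of each 𝒰ˡ lie at distance greater than R. -/
open Pointwise

/-- Chain-component ("sheet") of the preimage of `W` at scale `R`, based at `g`. -/
def sheetOf {G : Type*} [Group G] [TopologicalSpace G] (dG : PRICMetric G)
    (Gseq : ℕ → Subgroup G) (n : ℕ) (R : ℝ)
    (W : Set ((m : ℕ) × (G ⧸ Gseq m))) (g : G) : Set G :=
  {x | Relation.ReflTransGen (fun a b =>
      (⟨n, QuotientGroup.mk a⟩ : (m : ℕ) × (G ⧸ Gseq m)) ∈ W ∧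
      (⟨n, QuotientGroup.mk b⟩ : (m : ℕ) × (G ⧸ Gseq m)) ∈ W ∧ dG.d a b ≤ R) g x}

/-- If the box space of a regular residually compact approximation of `G`
has asymptotic dimension at most `s`, then so does `(G, d)` itself. -/
theorem asdim_le_of_asdim_box_space_le
    {G : Type*} [Group G] [TopologicalSpace G] [IsTopologicalGroup G]
    [LocallyCompactSpace G] [T2Space G] [SecondCountableTopology G]
    (dG : PRICMetric G)
    (Gseq : ℕ → Subgroup G)
    (hclosed : ∀ n, IsClosed ((Gseq n : Set G)))
    (hcc : ∀ n, IsCocompactSubgroup (Gseq n))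
    (hinter : (⋂ n, ((Gseq n) : Set G)) = {1})
    (hreg : ∀ F : Set G, IsCompact F → ∃ n, ∀ k : G,
      Set.InjOn (QuotientGroup.mk : G → G ⧸ Gseq n) ((fun x => x * k) '' F))
    (dB : ((n : ℕ) × (G ⧸ Gseq n)) → ((n : ℕ) × (G ⧸ Gseq n)) → ℝ)
    (hdB : IsBoxMetric dG Gseq dB)
    (s : ℕ)
    (hasdim : ∀ R : ℝ, 0 < R → ∃ B : ℝ, 0 < B ∧
      ∃ V : Fin (s + 1) → Set (Set ((n : ℕ) × (G ⧸ Gseq n))),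
        (∀ l, ∀ U ∈ V l, ∀ x ∈ U, ∀ y ∈ U, dB x y ≤ B) ∧
        (∀ S : Set ((n : ℕ) × (G ⧸ Gseq n)), (∀ x ∈ S, ∀ y ∈ S, dB x y ≤ R) →
          ∃ l, ∃ U ∈ V l, S ⊆ U) ∧
        (∀ l, ∀ U ∈ V l, ∀ U' ∈ V l, U ≠ U' → ∀ x ∈ U, ∀ y ∈ U', R < dB x y)) :
    ∀ R : ℝ, 0 < R → ∃ B' : ℝ, 0 < B' ∧
      ∃ U : Fin (s + 1) → Set (Set G),
        (∀ l, ∀ W ∈ U l, ∀ x ∈ W, ∀ y ∈ W, dG.d x y ≤ B') ∧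
        (∀ S : Set G, (∀ x ∈ S, ∀ y ∈ S, dG.d x y ≤ R) →
          ∃ l, ∃ W ∈ U l, S ⊆ W) ∧
        (∀ l, ∀ W ∈ U l, ∀ W' ∈ U l, W ≠ W' → ∀ x ∈ W, ∀ y ∈ W', R < dG.d x y) := by
  intro R hR
  obtain ⟨B, hB, V, hVdiam, hVcov, hVsep⟩ := hasdim R hR
  set C := B + R with hC
  have hCpos : 0 < C := by positivity
  have hnonneg : ∀ x y : G, 0 ≤ dG.d x y := by
    intro x y
    nlinarith [dG.d_triangle x y x, dG.d_self x, dG.d_symm x y]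
  obtain ⟨n, hn⟩ := hreg {y | dG.d 1 y ≤ 2 * C} (dG.proper 1 (2 * C))
  -- Key rigidity: if `h ∈ Gseq n` moves `x` within `C` of a point `C`-close to `x`, then `x*h = x`.
  have hkey : ∀ x y h : G, h ∈ Gseq n → dG.d x y ≤ C → dG.d (x * h) y ≤ C → x * h = x := by
    intro x y h hh hxy hxhy
    have hmem1 : (1 : G) ∈ {y | dG.d 1 y ≤ 2 * C} := by
      simp only [Set.mem_setOf_eq, dG.d_self]; positivity
    have hd2 : dG.d 1 (x * h * x⁻¹) ≤ 2 * C := by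
      have hri := dG.right_invariant 1 (x * h * x⁻¹) x
      have h1 : dG.d (1 * x) (x * h * x⁻¹ * x) = dG.d x (x * h) := by
        group
      have h3 : dG.d x (x * h) ≤ 2 * C := by
        have := dG.d_triangle x y (x * h)
        have hsy : dG.d y (x * h) = dG.d (x * h) y := dG.d_symm _ _
        linarith
      linarith [hri, h1.symm ▸ (by linarith [h3] : dG.d x (x * h) ≤ 2 * C)]
    have hmem2 : x * h * x⁻¹ ∈ {y | dG.d 1 y ≤ 2 * C} := hd2
    have him1 : (1 : G) * x ∈ (fun z => z * x) '' {y | dG.d 1 y ≤ 2 * C} :=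
      ⟨1, hmem1, rfl⟩
    have him2 : (x * h * x⁻¹) * x ∈ (fun z => z * x) '' {y | dG.d 1 y ≤ 2 * C} :=
      ⟨x * h * x⁻¹, hmem2, rfl⟩
    have heq : (QuotientGroup.mk ((1 : G) * x) : G ⧸ Gseq n)
        = QuotientGroup.mk ((x * h * x⁻¹) * x) := by
      rw [QuotientGroup.eq]
      have : ((1 : G) * x)⁻¹ * ((x * h * x⁻¹) * x) = h := by group
      rw [this]; exact hh
    have := hn x him1 him2 heq
    have hx : (1 : G) * x = (x * h * x⁻¹) * x := this
    have : x * h = x := by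
      have := hx.symm
      calc x * h = (x * h * x⁻¹) * x := by group
        _ = (1 : G) * x := hx.symm
        _ = x := one_mul x
    exact this
  -- quotDist is at most d
  have hle : ∀ x y : G, quotDist dG (Gseq n) x y ≤ dG.d x y := by
    intro x y
    have hmem : dG.d x y ∈ {r | ∃ h₁ ∈ Gseq n, ∃ h₂ ∈ Gseq n, r = dG.d (x * h₁) (y * h₂)} :=
      ⟨1, one_mem _, 1, one_mem _, by rw [mul_one, mul_one]⟩
    refine csInf_le ⟨0, ?_⟩ hmem
    rintro r ⟨h₁, _, h₂, _, rfl⟩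
    exact hnonneg _ _
  -- quotDist equals d at scale C
  have hiso : ∀ x y : G, dG.d x y ≤ C → quotDist dG (Gseq n) x y = dG.d x y := by
    intro x y hxy
    refine le_antisymm (hle x y) ?_
    have hmem : dG.d x y ∈ {r | ∃ h₁ ∈ Gseq n, ∃ h₂ ∈ Gseq n, r = dG.d (x * h₁) (y * h₂)} :=
      ⟨1, one_mem _, 1, one_mem _, by rw [mul_one, mul_one]⟩
    apply le_csInf ⟨dG.d x y, hmem⟩
    rintro r ⟨h₁, hh₁, h₂, hh₂, rfl⟩
    have hrw : dG.d (x * h₁) (y * h₂) = dG.d (x * (h₁ * h₂⁻¹)) y := by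
      have := dG.right_invariant (x * (h₁ * h₂⁻¹)) y h₂
      have h1 : x * (h₁ * h₂⁻¹) * h₂ = x * h₁ := by group
      rw [h1] at this
      exact this
    rw [hrw]
    by_cases hcase : dG.d (x * (h₁ * h₂⁻¹)) y ≤ C
    · have := hkey x y (h₁ * h₂⁻¹) (mul_mem hh₁ (inv_mem hh₂)) hxy hcase
      rw [this]
    · push_neg at hcase
      linarith
  -- relate dB to quotDist
  have hdBq := hdB.2.2.2.1
  -- the step relation is symmetric
  have hsym : ∀ W : Set ((m : ℕ) × (G ⧸ Gseq m)),
      Symmetric (fun a b : G =>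
        (⟨n, QuotientGroup.mk a⟩ : (m : ℕ) × (G ⧸ Gseq m)) ∈ W ∧
        (⟨n, QuotientGroup.mk b⟩ : (m : ℕ) × (G ⧸ Gseq m)) ∈ W ∧ dG.d a b ≤ R) := by
    intro W a b ⟨ha, hb, hab⟩
    exact ⟨hb, ha, by rwa [dG.d_symm]⟩
  -- membership of a sheet implies the point lies over W
  have hsheet_mem : ∀ (W : Set ((m : ℕ) × (G ⧸ Gseq m))) (g x : G),
      (⟨n, QuotientGroup.mk g⟩ : (m : ℕ) × (G ⧸ Gseq m)) ∈ W →
      x ∈ sheetOf dG Gseq n R W g →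
      (⟨n, QuotientGroup.mk x⟩ : (m : ℕ) × (G ⧸ Gseq m)) ∈ W := by
    intro W g x hg hx
    induction hx with
    | refl => exact hg
    | tail _ hstep ih => exact hstep.2.1
  -- points of a sheet of a member W of the cover stay within B of the base point
  have hsheet_diam : ∀ (l : Fin (s+1)) (W : Set ((m : ℕ) × (G ⧸ Gseq m))), W ∈ V l →
      ∀ (g x : G), (⟨n, QuotientGroup.mk g⟩ : (m : ℕ) × (G ⧸ Gseq m)) ∈ W →
      x ∈ sheetOf dG Gseq n R W g → dG.d g x ≤ B := by
    intro l W hW g x hg hx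
    induction hx with
    | refl => rw [dG.d_self]; positivity
    | @tail b c hgb hstep ih =>
      have hgc : dG.d g c ≤ C := by
        have := dG.d_triangle g b c
        linarith [ih, hstep.2.2]
      have hq : quotDist dG (Gseq n) g c = dG.d g c := hiso g c hgc
      have hbd : dB ⟨n, QuotientGroup.mk g⟩ ⟨n, QuotientGroup.mk c⟩ ≤ B :=
        hVdiam l W hW _ hg _ hstep.2.1
      rw [hdBq n g c, hq] at hbd
      exact hbd
  -- sheets are equivalence classes
  have hsheet_eq : ∀ (W : Set ((m : ℕ) × (G ⧸ Gseq m))) (g y : G),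
      y ∈ sheetOf dG Gseq n R W g → sheetOf dG Gseq n R W g = sheetOf dG Gseq n R W y := by
    intro W g y hy
    ext x
    constructor
    · intro hx
      exact Relation.ReflTransGen.trans ((@Relation.ReflTransGen.stdSymm _ _ ⟨fun a b h => hsym W h⟩).symm _ _ hy) hx
    · intro hx
      exact Relation.ReflTransGen.trans hy hx
  -- the pulled-back cover
  refine ⟨2 * B, by positivity, fun l =>
    insert ∅ {T | ∃ W ∈ V l, ∃ g : G,
      (⟨n, QuotientGroup.mk g⟩ : (m : ℕ) × (G ⧸ Gseq m)) ∈ W ∧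
      T = sheetOf dG Gseq n R W g}, ?_, ?_, ?_⟩
  · -- uniform bound
    rintro l T hT x hx y hy
    rcases hT with rfl | ⟨W, hW, g, hg, rfl⟩
    · exact absurd hx (Set.notMem_empty x)
    · have h1 := hsheet_diam l W hW g x hg hx
      have h2 := hsheet_diam l W hW g y hg hy
      have := dG.d_triangle x g y
      have hsy : dG.d x g = dG.d g x := dG.d_symm _ _
      linarith
  · -- covering
    intro S hS
    rcases Set.eq_empty_or_nonempty S with rfl | ⟨g, hg⟩
    · exact ⟨0, ∅, Set.mem_insert _ _, Set.empty_subset _⟩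
    · have hSim : ∀ x ∈ (fun z : G => (⟨n, QuotientGroup.mk z⟩ : (m : ℕ) × (G ⧸ Gseq m))) '' S,
          ∀ y ∈ (fun z : G => (⟨n, QuotientGroup.mk z⟩ : (m : ℕ) × (G ⧸ Gseq m))) '' S,
          dB x y ≤ R := by
        rintro _ ⟨a, ha, rfl⟩ _ ⟨b, hb, rfl⟩
        rw [hdBq n a b]
        exact le_trans (hle a b) (hS a ha b hb)
      obtain ⟨l, W, hW, hsub⟩ := hVcov _ hSim
      have hgW : (⟨n, QuotientGroup.mk g⟩ : (m : ℕ) × (G ⧸ Gseq m)) ∈ W :=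
        hsub ⟨g, hg, rfl⟩
      refine ⟨l, sheetOf dG Gseq n R W g,
        Set.mem_insert_of_mem _ ⟨W, hW, g, hgW, rfl⟩, ?_⟩
      intro x hx
      exact Relation.ReflTransGen.single ⟨hgW, hsub ⟨x, hx, rfl⟩, hS g hg x hx⟩
  · -- separation
    rintro l T hT T' hT' hne x hx y hy
    rcases hT with rfl | ⟨W, hW, g, hg, rfl⟩
    · exact absurd hx (Set.notMem_empty x)
    rcases hT' with rfl | ⟨W', hW', g', hg', rfl⟩
    · exact absurd hy (Set.notMem_empty y)
    have hxW := hsheet_mem W g x hg hx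
    have hyW' := hsheet_mem W' g' y hg' hy
    by_cases hWW : W = W'
    · subst hWW
      by_contra hcon
      push_neg at hcon
      have hstep : y ∈ sheetOf dG Gseq n R W x :=
        Relation.ReflTransGen.single ⟨hxW, hyW', hcon⟩
      have h1 : sheetOf dG Gseq n R W g = sheetOf dG Gseq n R W x := hsheet_eq W g x hx
      have h2 : sheetOf dG Gseq n R W g' = sheetOf dG Gseq n R W y := hsheet_eq W g' y hy
      have h3 : sheetOf dG Gseq n R W x = sheetOf dG Gseq n R W y :=
        hsheet_eq W x y hstep
      exact hne (by rw [h1, h3, ← h2])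
    · have := hVsep l W hW W' hW' hWW _ hxW _ hyW'
      rw [hdBq n x y] at this
      exact lt_of_lt_of_le this (hle x y)
end

section
/- Let G be a second countable locally compact Hausdorff residually compact group with a regular residually compact approximation σ = (G_n)_{n∈ℕ}, and let H ≤ G be an open normal subgroup. Then κ = (H ∩ G_n)_{n∈ℕ} is a regular residually compact approximation of the topological group H: each H ∩ G_n is a closed cocompact subgroup of H, ⋂_{n∈ℕ}(H ∩ G_n) = {1}, and for every compact subset F ⊆ H there is n ∈ ℕ such that F⁻¹F ∩ ⋃_{k∈H} k (H ∩ G_n) k⁻¹ = {1}. -/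
set_option maxHeartbeats 1000000


open Pointwise

/-- If `σ = (Gₙ)` is a regular residually compact approximation of a second
countable locally compact Hausdorff residually compact group `G` and `H ≤ G` is an open
normal subgroup, then `κ = (H ∩ Gₙ)` is a regular residually compact approximation of `H`:
each `H ∩ Gₙ` is closed and cocompact in `H`, `⋂ₙ (H ∩ Gₙ) = {1}`, and for every compact
`F ⊆ H` there is `n` with `F⁻¹F ∩ ⋃_{k∈H} k (H ∩ Gₙ) k⁻¹` trivial. -/
theorem regular_approximation_inter_open_normal_subgroup
    {G : Type*} [Group G] [TopologicalSpace G] [IsTopologicalGroup G]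
    [LocallyCompactSpace G] [T2Space G] [SecondCountableTopology G]
    (Gseq : ℕ → Subgroup G)
    (hclosed : ∀ n, IsClosed ((Gseq n : Set G)))
    (hcc : ∀ n, IsCocompactSubgroup (Gseq n))
    (hinter : (⋂ n, ((Gseq n) : Set G)) = {1})
    (hreg : ∀ F : Set G, IsCompact F → ∃ n, ∀ k : G,
      Set.InjOn (QuotientGroup.mk : G → G ⧸ Gseq n) ((fun x => x * k) '' F))
    (H : Subgroup G) (hopen : IsOpen (H : Set G)) (hnormal : H.Normal) :
    (∀ n, IsClosed ((H ⊓ Gseq n : Subgroup G) : Set G)) ∧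
    (∀ n, ∃ K : Set G, K ⊆ (H : Set G) ∧ IsCompact K ∧
      K * ((H ⊓ Gseq n : Subgroup G) : Set G) = (H : Set G)) ∧
    (⋂ n, ((H ⊓ Gseq n : Subgroup G) : Set G)) = {1} ∧
    (∀ F : Set G, F ⊆ (H : Set G) → IsCompact F → ∃ n,
      (F⁻¹ * F) ∩ (⋃ k ∈ (H : Set G),
        (fun x => k * x * k⁻¹) '' ((H ⊓ Gseq n : Subgroup G) : Set G)) ⊆ {1}) := by
  haveI := hnormal
  have hHclosed : IsClosed (H : Set G) := H.isClosed_of_isOpen hopen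
  refine ⟨fun n => ?_, fun n => ?_, ?_, ?_⟩
  · rw [Subgroup.coe_inf]
    exact hHclosed.inter (hclosed n)
  · obtain ⟨K₀, hK₀c, hK₀⟩ := hcc n
    have hUopen : IsOpen ((H ⊔ Gseq n : Subgroup G) : Set G) :=
      Subgroup.isOpen_mono le_sup_left hopen
    have hUclosed : IsClosed ((H ⊔ Gseq n : Subgroup G) : Set G) :=
      (H ⊔ Gseq n).isClosed_of_isOpen hUopen
    set C : Set G := K₀ ∩ ((H ⊔ Gseq n : Subgroup G) : Set G) with hCdef
    have hC : IsCompact C := hK₀c.inter_right hUclosed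
    have hcover : C ⊆ ⋃ g : (Gseq n), ((g : G) • (H : Set G)) := by
      rintro x ⟨hxK, hxU⟩
      have hxU' : x ∈ ((H : Set G) * (Gseq n : Set G)) := by
        rw [← Subgroup.normal_mul]; exact hxU
      obtain ⟨h, hh, g, hg, rfl⟩ := hxU'
      refine Set.mem_iUnion.2 ⟨⟨g, hg⟩, ?_⟩
      rw [Set.mem_smul_set_iff_inv_smul_mem]
      have : g⁻¹ * (h * g) = g⁻¹ * h * g⁻¹⁻¹ := by group
      simpa [this] using hnormal.conj_mem h hh g⁻¹
    obtain ⟨t, ht⟩ := hC.elim_finite_subcover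
      (fun g : (Gseq n) => ((g : G) • (H : Set G)))
      (fun g => hopen.smul (g : G)) hcover
    set K₁ : Set G := ⋃ g ∈ t, (((fun x => x * (g : G)⁻¹) '' C) ∩ (H : Set G)) with hK₁def
    have hK₁H : K₁ ⊆ (H : Set G) := by
      intro x hx
      obtain ⟨g, hg, hx⟩ := Set.mem_iUnion₂.1 hx
      exact hx.2
    refine ⟨K₁, hK₁H, ?_, ?_⟩
    · exact t.finite_toSet.isCompact_biUnion (fun g _ =>
        ((hC.image (continuous_mul_right _)).inter_right hHclosed))
    · apply Set.Subset.antisymm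
      · rintro x ⟨a, ha, b, hb, rfl⟩
        rw [Subgroup.coe_inf] at hb
        exact mul_mem (hK₁H ha) hb.1
      · intro h hh
        have : h ∈ K₀ * (Gseq n : Set G) := hK₀ ▸ Set.mem_univ h
        obtain ⟨k, hk, g, hg, rfl⟩ := this
        have hkC : k ∈ C := by
          refine ⟨hk, ?_⟩
          have : k = (k * g) * g⁻¹ := by group
          rw [this]
          exact mul_mem (Subgroup.mem_sup_left hh)
            (Subgroup.mem_sup_right (inv_mem hg))
        obtain ⟨i, hit, hki⟩ := Set.mem_iUnion₂.1 (ht hkC)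
        rw [Set.mem_smul_set_iff_inv_smul_mem] at hki
        have hih : (i : G)⁻¹ * k ∈ H := hki
        have hh' : k * (i : G)⁻¹ ∈ H := by
          have : k * (i : G)⁻¹ = (i : G) * ((i : G)⁻¹ * k) * (i : G)⁻¹ := by group
          rw [this]
          exact hnormal.conj_mem _ hih _
        refine ⟨k * (i : G)⁻¹, ?_, (i : G) * g, ?_, by group⟩
        · exact Set.mem_biUnion hit ⟨⟨k, hkC, rfl⟩, hh'⟩
        · rw [Subgroup.coe_inf]
          constructor
          · have : (i : G) * g = (k * (i:G)⁻¹)⁻¹ * (k * g) := by group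
            rw [this]
            exact mul_mem (inv_mem hh') hh
          · exact mul_mem i.2 hg
  · ext x
    simp only [Set.mem_iInter, Subgroup.coe_inf, Set.mem_inter_iff, Set.mem_singleton_iff]
    constructor
    · intro hx
      have : x ∈ ⋂ n, ((Gseq n) : Set G) := Set.mem_iInter.2 fun n => (hx n).2
      rw [hinter] at this
      exact this
    · rintro rfl
      exact fun n => ⟨H.one_mem, (Gseq n).one_mem⟩
  · intro F hFH hF
    obtain ⟨n, hn⟩ := hreg F hF
    refine ⟨n, ?_⟩
    rintro x ⟨hx1, hx2⟩
    simp only [Set.mem_iUnion] at hx2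
    obtain ⟨k, hkH, g, hg, hxeq⟩ := hx2
    obtain ⟨a, ha, b, hb, rfl⟩ := hx1
    rw [Set.mem_inv] at ha
    have hgG : g ∈ Gseq n := by
      rw [Subgroup.coe_inf] at hg; exact hg.2
    have hq : (QuotientGroup.mk (a⁻¹ * k) : G ⧸ Gseq n) = QuotientGroup.mk (b * k) := by
      rw [QuotientGroup.eq]
      have : (a⁻¹ * k)⁻¹ * (b * k) = k⁻¹ * (a * b) * k := by group
      have hxeq' : k * g * k⁻¹ = a * b := by simpa using hxeq
      rw [this, ← hxeq']
      have : k⁻¹ * (k * g * k⁻¹) * k = g := by group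
      rw [this]
      exact hgG
    have := hn k ⟨a⁻¹, ha, rfl⟩ ⟨b, hb, rfl⟩ hq
    have hab : a⁻¹ = b := mul_right_cancel this
    rw [← hab]
    simp
end

section
/- Let G be a second countable locally compact Hausdorff group with a left Haar measure ν, let s ∈ ℕ, and let (G_n)_{n∈ℕ} be a sequence of subgroups of G. Suppose that for every δ > 0 and every compact subset M ⊆ G there exist n ∈ ℕ and continuous compactly supported functions μ₀, …, μ_s : G → [0,1] such that: (a) supp(μ_l) ∩ supp(μ_l)·h = ∅ for every l ∈ {0,…,s} and every h ∈ G_n \ {1_G}; (b) ∑_{l=0}^{s} ∑_{h∈G_n} μ_l(gh) = 1 for every g ∈ G; (c) sup_{h∈G} |μ_l(h) − μ_l(gh)| ≤ δ for every l and every g ∈ M. Then G is amenable in the Følner sense: for every ε > 0 and every compact subset M ⊆ G there exists f ∈ L¹(G, ν) with f ≥ 0 almost everywhere, ‖f‖₁ = 1, and ‖f(x·) − f‖₁ ≤ ε for every x ∈ M, where f(x·) denotes the function t ↦ f(xt). -/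
open MeasureTheory
open scoped ENNReal

namespace AmenablePartitionAux

lemma tsum_le_of_unique {ι : Type*} {f : ι → ℝ≥0∞} {c : ℝ≥0∞}
    (huniq : ∀ i j, f i ≠ 0 → f j ≠ 0 → i = j) (hle : ∀ i, f i ≤ c) :
    ∑' i, f i ≤ c := by
  by_cases h : ∃ i, f i ≠ 0
  · obtain ⟨i, hi⟩ := h
    rw [tsum_eq_single i fun j hj => by
      by_contra hc
      exact hj (huniq j i hc hi)]
    exact hle i
  · push_neg at h
    simp [h]

lemma ofReal_tsum_of_unique {ι : Type*} {f : ι → ℝ}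
    (huniq : ∀ i j, f i ≠ 0 → f j ≠ 0 → i = j) :
    ∑' i, ENNReal.ofReal (f i) = ENNReal.ofReal (∑' i, f i) := by
  by_cases h : ∃ i, f i ≠ 0
  · obtain ⟨i, hi⟩ := h
    have hz : ∀ j, j ≠ i → f j = 0 := fun j hj => by
      by_contra hc
      exact hj (huniq j i hc hi)
    rw [tsum_eq_single i (fun j hj => by rw [hz j hj, ENNReal.ofReal_zero]),
      tsum_eq_single i hz]
  · push_neg at h
    simp [h]

variable {G : Type*} [Group G] [TopologicalSpace G] [IsTopologicalGroup G]
  [MeasurableSpace G] [BorelSpace G]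

lemma uniqueH {s : ℕ} {Γ : Subgroup G} {μ : Fin (s + 1) → G → ℝ}
    (hdisj : ∀ l, ∀ h ∈ Γ, h ≠ 1 →
      Disjoint (tsupport (μ l)) ((fun g => g * h) '' tsupport (μ l)))
    (l : Fin (s + 1)) (g : G) {h h' : Γ}
    (hh : μ l (g * (h : G)) ≠ 0) (hh' : μ l (g * (h' : G)) ≠ 0) : h = h' := by
  by_contra hne
  have hk : ((h : G)⁻¹ * (h' : G)) ∈ Γ := mul_mem (inv_mem h.2) h'.2
  have hk1 : ((h : G)⁻¹ * (h' : G)) ≠ 1 := fun e =>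
    hne (Subtype.ext (inv_mul_eq_one.mp e))
  have m1 : g * (h : G) ∈ tsupport (μ l) :=
    subset_tsupport _ (Function.mem_support.mpr hh)
  have m2 : g * (h' : G) ∈ tsupport (μ l) :=
    subset_tsupport _ (Function.mem_support.mpr hh')
  exact Set.disjoint_left.mp (hdisj l _ hk hk1) m2
    ⟨g * (h : G), m1, by show g * (h : G) * ((h : G)⁻¹ * (h' : G)) = g * (h' : G); rw [mul_assoc, mul_inv_cancel_left]⟩

lemma uniqueCoset {s : ℕ} {Γ : Subgroup G} {μ : Fin (s + 1) → G → ℝ}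
    (hdisj : ∀ l, ∀ h ∈ Γ, h ≠ 1 →
      Disjoint (tsupport (μ l)) ((fun g => g * h) '' tsupport (μ l)))
    (l : Fin (s + 1)) (y : G) {h h' : Γ}
    (hm : y * (h : G)⁻¹ ∈ tsupport (μ l)) (hm' : y * (h' : G)⁻¹ ∈ tsupport (μ l)) :
    h = h' := by
  by_contra hne
  have hk : ((h : G) * (h' : G)⁻¹) ∈ Γ := mul_mem h.2 (inv_mem h'.2)
  have hk1 : ((h : G) * (h' : G)⁻¹) ≠ 1 := fun e =>
    hne (Subtype.ext (mul_inv_eq_one.mp e))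
  exact Set.disjoint_left.mp (hdisj l _ hk hk1) hm'
    ⟨y * (h : G)⁻¹, hm, by show y * (h : G)⁻¹ * ((h : G) * (h' : G)⁻¹) = y * (h' : G)⁻¹; rw [mul_assoc, inv_mul_cancel_left]⟩

lemma exists_ne_zero {s : ℕ} {Γ : Subgroup G} {μ : Fin (s + 1) → G → ℝ}
    (hpart : ∀ g : G, ∑ l : Fin (s + 1), ∑' h : Γ, μ l (g * (h : G)) = 1) :
    ∃ (l : Fin (s + 1)) (h : Γ), μ l ((h : G)) ≠ 0 := by
  by_contra hc
  push_neg at hc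
  have h0 : ∀ l : Fin (s + 1), ∑' h : Γ, μ l ((1 : G) * (h : G)) = 0 := by
    intro l
    have h1 : ∀ h : Γ, μ l ((1 : G) * (h : G)) = 0 := fun h => by
      simpa using hc l h
    simp only [one_mul] at h1
    simp only [one_mul, h1, tsum_zero]
  have := hpart 1
  rw [Finset.sum_congr rfl (fun l _ => h0 l)] at this
  simp at this

lemma countableSubgroup [SecondCountableTopology G]
    {s : ℕ} {Γ : Subgroup G} {μ : Fin (s + 1) → G → ℝ}
    (hcont : ∀ l, Continuous (μ l))
    (hdisj : ∀ l, ∀ h ∈ Γ, h ≠ 1 →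
      Disjoint (tsupport (μ l)) ((fun g => g * h) '' tsupport (μ l)))
    (hpart : ∀ g : G, ∑ l : Fin (s + 1), ∑' h : Γ, μ l (g * (h : G)) = 1) :
    Countable Γ := by
  obtain ⟨l₀, h₀, hne0⟩ := exists_ne_zero hpart
  obtain ⟨D, hDc, hDd⟩ := TopologicalSpace.exists_countable_dense G
  set U : Set G := Function.support (μ l₀) with hUdef
  have hUo : IsOpen U := (hcont l₀).isOpen_support
  have key : ∀ h : Γ, ∃ d, d ∈ D ∧ d ∈ (fun x => x * (h : G)) '' U := by
    intro h
    have himo : IsOpen ((fun x => x * (h : G)) '' U) :=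
      (Homeomorph.mulRight (h : G)).isOpenMap U hUo
    have hne : ((fun x => x * (h : G)) '' U).Nonempty :=
      ⟨(h₀ : G) * (h : G), ⟨(h₀ : G), Function.mem_support.mpr hne0, rfl⟩⟩
    obtain ⟨x, hxD, hxU⟩ := hDd.exists_mem_open himo hne
    exact ⟨x, hxD, hxU⟩
  choose d hdD hdU using key
  have hinj : Function.Injective d := by
    intro h h' he
    by_contra hne'
    obtain ⟨x, hxU, hx⟩ := hdU h
    obtain ⟨x', hx'U, hx'⟩ := hdU h'
    have hk : ((h : G) * (h' : G)⁻¹) ∈ Γ := mul_mem h.2 (inv_mem h'.2)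
    have hk1 : ((h : G) * (h' : G)⁻¹) ≠ 1 := fun e =>
      hne' (Subtype.ext (mul_inv_eq_one.mp e))
    have hx2 : x * (h : G) = d h := hx
    have hx'2 : x' * (h' : G) = d h' := hx'
    have hxx : x' = x * ((h : G) * (h' : G)⁻¹) := by
      have hxe : x * (h : G) = x' * (h' : G) := by rw [hx2, he, hx'2]
      rw [← mul_assoc]
      exact eq_mul_inv_iff_mul_eq.mpr hxe.symm
    exact Set.disjoint_left.mp (hdisj l₀ _ hk hk1)
      (subset_tsupport _ hx'U)
      ⟨x, subset_tsupport _ hxU, hxx.symm⟩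
  haveI : Countable D := hDc.to_subtype
  exact Function.Injective.countable
    (f := fun h : Γ => (⟨d h, hdD h⟩ : D))
    (fun a b hab => hinj (congrArg Subtype.val hab))

lemma epart {s : ℕ} {Γ : Subgroup G} {μ : Fin (s + 1) → G → ℝ}
    (hicc : ∀ l g, μ l g ∈ Set.Icc (0 : ℝ) 1)
    (hdisj : ∀ l, ∀ h ∈ Γ, h ≠ 1 →
      Disjoint (tsupport (μ l)) ((fun g => g * h) '' tsupport (μ l)))
    (hpart : ∀ g : G, ∑ l : Fin (s + 1), ∑' h : Γ, μ l (g * (h : G)) = 1) :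
    ∀ g : G, ∑ l : Fin (s + 1), ∑' h : Γ, ENNReal.ofReal (μ l (g * (h : G))) = 1 := by
  intro g
  have e1 : ∀ l : Fin (s + 1),
      ∑' h : Γ, ENNReal.ofReal (μ l (g * (h : G)))
        = ENNReal.ofReal (∑' h : Γ, μ l (g * (h : G))) :=
    fun l => ofReal_tsum_of_unique (fun i j hi hj => uniqueH hdisj l g hi hj)
  rw [Finset.sum_congr rfl (fun l _ => e1 l),
    ← ENNReal.ofReal_sum_of_nonneg (fun l _ => tsum_nonneg (fun h => (hicc l _).1)),
    hpart g, ENNReal.ofReal_one]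

lemma key_id {s : ℕ} {Γ : Subgroup G} [Countable Γ] {μ : Fin (s + 1) → G → ℝ}
    (τ : Measure G) [τ.IsMulRightInvariant]
    (hcont : ∀ l, Continuous (μ l))
    (hpartE : ∀ g : G, ∑ l : Fin (s + 1), ∑' h : Γ, ENNReal.ofReal (μ l (g * (h : G))) = 1)
    {ψ : G → ℝ≥0∞} (hψ : Measurable ψ) :
    ∫⁻ g, ψ g ∂τ
      = ∑ l : Fin (s + 1),
          ∫⁻ y, ENNReal.ofReal (μ l y) * (∑' h : Γ, ψ (y * (h : G)⁻¹)) ∂τ := by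
  have hm : ∀ (l : Fin (s + 1)) (h : Γ),
      Measurable fun g => ψ g * ENNReal.ofReal (μ l (g * (h : G))) := fun l h =>
    hψ.mul (((hcont l).comp (continuous_mul_right ((h : G)))).measurable.ennreal_ofReal)
  calc ∫⁻ g, ψ g ∂τ
      = ∫⁻ g, ∑ l : Fin (s + 1), ∑' h : Γ, ψ g * ENNReal.ofReal (μ l (g * (h : G))) ∂τ := by
        refine lintegral_congr fun g => ?_
        simp only [ENNReal.tsum_mul_left, ← Finset.mul_sum, hpartE g, mul_one]
    _ = ∑ l : Fin (s + 1), ∫⁻ g, ∑' h : Γ, ψ g * ENNReal.ofReal (μ l (g * (h : G))) ∂τ :=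
        lintegral_finset_sum _ (fun l _ => Measurable.ennreal_tsum (fun h => hm l h))
    _ = ∑ l : Fin (s + 1), ∑' h : Γ, ∫⁻ g, ψ g * ENNReal.ofReal (μ l (g * (h : G))) ∂τ :=
        Finset.sum_congr rfl (fun l _ => lintegral_tsum (fun h => (hm l h).aemeasurable))
    _ = ∑ l : Fin (s + 1), ∑' h : Γ, ∫⁻ y, ψ (y * (h : G)⁻¹) * ENNReal.ofReal (μ l y) ∂τ := by
        refine Finset.sum_congr rfl fun l _ => tsum_congr fun h => ?_
        rw [← lintegral_mul_right_eq_self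
          (fun y => ψ (y * (h : G)⁻¹) * ENNReal.ofReal (μ l y)) (h : G)]
        refine lintegral_congr fun x => ?_
        rw [mul_inv_cancel_right]
    _ = ∑ l : Fin (s + 1), ∫⁻ y, ∑' h : Γ, ψ (y * (h : G)⁻¹) * ENNReal.ofReal (μ l y) ∂τ :=
        Finset.sum_congr rfl (fun l _ => (lintegral_tsum (fun h =>
          ((hψ.comp (measurable_mul_const _)).mul
            ((hcont l).measurable.ennreal_ofReal)).aemeasurable)).symm)
    _ = ∑ l : Fin (s + 1),
          ∫⁻ y, ENNReal.ofReal (μ l y) * (∑' h : Γ, ψ (y * (h : G)⁻¹)) ∂τ := by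
        refine Finset.sum_congr rfl fun l _ => lintegral_congr fun y => ?_
        rw [ENNReal.tsum_mul_right, mul_comm]

lemma sum_translates_eq_one {s : ℕ} {Γ : Subgroup G} {μ : Fin (s + 1) → G → ℝ}
    (hpartE : ∀ g : G, ∑ l : Fin (s + 1), ∑' h : Γ, ENNReal.ofReal (μ l (g * (h : G))) = 1)
    (z : G) :
    ∑' h : Γ, ∑ l : Fin (s + 1), ENNReal.ofReal (μ l (z * (h : G)⁻¹)) = 1 := by
  rw [Summable.tsum_finsetSum (fun l _ => ENNReal.summable)]
  have e : ∀ l : Fin (s + 1),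
      ∑' h : Γ, ENNReal.ofReal (μ l (z * (h : G)⁻¹))
        = ∑' h : Γ, ENNReal.ofReal (μ l (z * (h : G))) := by
    intro l
    rw [← (Equiv.inv Γ).tsum_eq (fun h : Γ => ENNReal.ofReal (μ l (z * (h : G))))]
    refine tsum_congr fun h => ?_
    simp
  rw [Finset.sum_congr rfl (fun l _ => e l)]
  exact hpartE z

lemma measure_tsupport_le {s : ℕ} {Γ : Subgroup G} [Countable Γ]
    {μ : Fin (s + 1) → G → ℝ}
    (τ : Measure G) [τ.IsMulRightInvariant]
    (hcont : ∀ l, Continuous (μ l))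
    (hdisj : ∀ l, ∀ h ∈ Γ, h ≠ 1 →
      Disjoint (tsupport (μ l)) ((fun g => g * h) '' tsupport (μ l)))
    (hpartE : ∀ g : G, ∑ l : Fin (s + 1), ∑' h : Γ, ENNReal.ofReal (μ l (g * (h : G))) = 1)
    (l₀ : Fin (s + 1)) :
    τ (tsupport (μ l₀)) ≤ ∑ l : Fin (s + 1), ∫⁻ y, ENNReal.ofReal (μ l y) ∂τ := by
  set K := tsupport (μ l₀) with hK
  have hKm : MeasurableSet K := (isClosed_tsupport _).measurableSet
  have h1 : τ K = ∫⁻ g, K.indicator (fun _ => (1 : ℝ≥0∞)) g ∂τ := by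
    rw [lintegral_indicator hKm, setLIntegral_one]
  rw [h1, key_id τ hcont hpartE (measurable_const.indicator hKm)]
  refine Finset.sum_le_sum fun l _ => ?_
  have hS : ∀ y : G, (∑' h : Γ, K.indicator (fun _ => (1 : ℝ≥0∞)) (y * (h : G)⁻¹)) ≤ 1 := by
    intro y
    refine tsum_le_of_unique (fun i j hi hj => ?_) (fun i => ?_)
    · refine uniqueCoset hdisj l₀ y ?_ ?_
      · by_contra hmem
        exact hi (Set.indicator_of_notMem hmem _)
      · by_contra hmem
        exact hj (Set.indicator_of_notMem hmem _)
    · by_cases hmem : y * (i : G)⁻¹ ∈ K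
      · rw [Set.indicator_of_mem hmem]
      · rw [Set.indicator_of_notMem hmem]
        exact zero_le
  calc ∫⁻ y, ENNReal.ofReal (μ l y) * (∑' h : Γ, K.indicator (fun _ => (1 : ℝ≥0∞)) (y * (h : G)⁻¹)) ∂τ
      ≤ ∫⁻ y, ENNReal.ofReal (μ l y) * 1 ∂τ :=
        lintegral_mono fun y => mul_le_mul_right (hS y) _
    _ = ∫⁻ y, ENNReal.ofReal (μ l y) ∂τ := by simp

end AmenablePartitionAux

open AmenablePartitionAux

/-- If a second countable locally compact Hausdorff group `G` with left
Haar measure `ν` admits, for every `δ > 0` and compact `M ⊆ G`, continuous compactly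
supported `[0,1]`-valued functions `μ₀, …, μ_s` whose `Gₙ`-translates form a partition of
unity with disjoint supports along some subgroup `Gₙ` and which are `δ`-invariant under left
translation by `M`, then `G` is amenable in the Følner sense. -/
theorem amenable_of_partitions_of_unity
    {G : Type*} [Group G] [TopologicalSpace G] [IsTopologicalGroup G]
    [LocallyCompactSpace G] [T2Space G] [SecondCountableTopology G]
    [MeasurableSpace G] [BorelSpace G]
    (ν : Measure G) [ν.IsHaarMeasure]
    (s : ℕ) (Gseq : ℕ → Subgroup G)
    (hpart : ∀ δ : ℝ, 0 < δ → ∀ M : Set G, IsCompact M →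
      ∃ n : ℕ, ∃ μ : Fin (s + 1) → G → ℝ,
        (∀ l, Continuous (μ l)) ∧
        (∀ l, HasCompactSupport (μ l)) ∧
        (∀ l g, μ l g ∈ Set.Icc (0 : ℝ) 1) ∧
        (∀ l, ∀ h ∈ Gseq n, h ≠ 1 →
          Disjoint (tsupport (μ l)) ((fun g => g * h) '' tsupport (μ l))) ∧
        (∀ g : G, ∑ l : Fin (s + 1), ∑' h : (Gseq n), μ l (g * (h : G)) = 1) ∧
        (∀ l, ∀ g ∈ M, ∀ h : G, |μ l h - μ l (g * h)| ≤ δ)) :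
    ∀ ε : ℝ, 0 < ε → ∀ M : Set G, IsCompact M →
      ∃ f : G → ℝ, Integrable f ν ∧ (∀ᵐ x ∂ν, 0 ≤ f x) ∧
        (∫ x, |f x| ∂ν) = 1 ∧
        ∀ g ∈ M, (∫ x, |f (g * x) - f x| ∂ν) ≤ ε := by
  intro ε hε M hM
  -- Step 1: `ν` is right invariant (the hypothesis forces unimodularity).
  have hRI : ν.IsMulRightInvariant := by
    obtain ⟨n, μ, hcont, hsupp, hicc, hdisj, hpart1, -⟩ :=
      hpart 1 one_pos ∅ isCompact_empty
    haveI hcnt : Countable (Gseq n) := countableSubgroup hcont hdisj hpart1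
    have hpartE := epart hicc hdisj hpart1
    set Ft : G → ℝ≥0∞ := fun x => ∑ l : Fin (s + 1), ENNReal.ofReal (μ l x) with hFtdef
    have hFtm : Measurable Ft :=
      Finset.measurable_sum _ (fun l _ => (hcont l).measurable.ennreal_ofReal)
    set V := ∫⁻ x, Ft x ∂ν.inv with hVdef
    obtain ⟨l₀, h₀, hne0⟩ := exists_ne_zero hpart1
    have hVpos : 0 < V := by
      rw [hVdef, lintegral_pos_iff_support hFtm]
      have hsub : Function.support (μ l₀) ⊆ Function.support Ft := by
        intro x hx
        have hlt : 0 < ENNReal.ofReal (μ l₀ x) := by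
          rw [ENNReal.ofReal_pos]
          exact lt_of_le_of_ne (hicc l₀ x).1 (Ne.symm hx)
        have hle : ENNReal.ofReal (μ l₀ x) ≤ Ft x := by
          simp only [hFtdef]
          exact Finset.single_le_sum (f := fun l => ENNReal.ofReal (μ l x))
            (fun l _ => zero_le) (Finset.mem_univ l₀)
        exact Function.mem_support.mpr fun h0 => by
          rw [h0] at hle
          exact hlt.not_ge hle
      refine lt_of_lt_of_le ?_ (measure_mono hsub)
      rw [Measure.inv_apply]
      refine IsOpen.measure_pos ν ((hcont l₀).isOpen_support.inv) ?_
      exact ⟨(h₀ : G)⁻¹, by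
        rw [Set.mem_inv, inv_inv]
        exact Function.mem_support.mpr hne0⟩
    have hVfin : V < ⊤ := by
      have hind : ∀ x, Ft x ≤
          ∑ l : Fin (s + 1), (tsupport (μ l)).indicator (fun _ => (1 : ℝ≥0∞)) x := by
        intro x
        refine Finset.sum_le_sum fun l _ => ?_
        by_cases hx : x ∈ tsupport (μ l)
        · rw [Set.indicator_of_mem hx]
          exact ENNReal.ofReal_le_one.mpr (hicc l x).2
        · rw [Set.indicator_of_notMem hx, image_eq_zero_of_notMem_tsupport hx]
          simp
      calc V ≤ ∫⁻ x, ∑ l : Fin (s + 1),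
              (tsupport (μ l)).indicator (fun _ => (1 : ℝ≥0∞)) x ∂ν.inv :=
            lintegral_mono hind
        _ = ∑ l : Fin (s + 1), ν.inv (tsupport (μ l)) := by
            rw [lintegral_finset_sum _
              (fun l _ => measurable_const.indicator (isClosed_tsupport _).measurableSet)]
            exact Finset.sum_congr rfl fun l _ => by
              rw [lintegral_indicator (isClosed_tsupport _).measurableSet, setLIntegral_one]
        _ < ⊤ := by
            refine ENNReal.sum_lt_top.mpr fun l _ => ?_
            rw [Measure.inv_apply]
            exact ((hsupp l).inv).measure_lt_top
    constructor
    intro g₀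
    have hmeasR : Measurable fun x : G => x * g₀ := measurable_mul_const g₀
    set m := Measure.map (fun x : G => x * g₀) ν with hmdef
    haveI hmL : m.IsMulLeftInvariant := by
      refine ⟨fun g => ?_⟩
      show Measure.map (fun x => g * x) m = m
      rw [hmdef, Measure.map_map (measurable_const_mul g) hmeasR]
      have he : ((fun x : G => g * x) ∘ fun x => x * g₀)
          = (fun x => x * g₀) ∘ (fun x => g * x) := by
        funext x
        simp [mul_assoc]
      rw [he, ← Measure.map_map hmeasR (measurable_const_mul g)]
      congr 1
      exact map_mul_left_eq_self ν g
    haveI hmF : IsFiniteMeasureOnCompacts m := by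
      refine ⟨fun K hK => ?_⟩
      rw [hmdef, Measure.map_apply hmeasR hK.measurableSet]
      have he : (fun x : G => x * g₀) ⁻¹' K = (fun x : G => x * g₀⁻¹) '' K := by
        ext x
        constructor
        · intro hx
          exact ⟨x * g₀, hx, by simp [mul_assoc]⟩
        · rintro ⟨y, hy, rfl⟩
          simpa [mul_assoc] using hy
      rw [he]
      exact (hK.image (continuous_mul_right g₀⁻¹)).measure_lt_top
    have hsm : m = ((m.haarScalarFactor ν : ℝ≥0∞)) • ν := by
      conv_lhs => rw [Measure.isMulLeftInvariant_eq_smul m ν]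
      ext s1 hs1
      simp only [Measure.smul_apply, ENNReal.smul_def]
    set c : ℝ≥0∞ := ((m.haarScalarFactor ν : ℝ≥0∞)) with hcdef
    have hminv1 : m.inv = Measure.map (fun x => g₀⁻¹ * x) ν.inv := by
      show Measure.map Inv.inv m = _
      rw [hmdef, Measure.map_map measurable_inv hmeasR]
      have he : (Inv.inv ∘ fun x : G => x * g₀) = (fun x => g₀⁻¹ * x) ∘ Inv.inv := by
        funext x
        simp [mul_inv_rev]
      rw [he, ← Measure.map_map (measurable_const_mul g₀⁻¹) measurable_inv]
      rfl
    have hminv2 : m.inv = c • ν.inv := by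
      rw [hsm]
      show Measure.map Inv.inv (c • ν) = c • ν.inv
      rw [Measure.map_smul]
      rfl
    have hI2 : ∫⁻ x, Ft x ∂(m.inv) = V := by
      rw [hminv1, lintegral_map hFtm (measurable_const_mul g₀⁻¹)]
      rw [key_id (Γ := Gseq n) ν.inv hcont hpartE (ψ := fun x => Ft (g₀⁻¹ * x))
        (hFtm.comp (measurable_const_mul g₀⁻¹))]
      have hone : ∀ y : G,
          (∑' h : (Gseq n), Ft (g₀⁻¹ * (y * (h : G)⁻¹))) = 1 := by
        intro y
        have e2 : ∀ h : (Gseq n), Ft (g₀⁻¹ * (y * (h : G)⁻¹))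
            = ∑ l : Fin (s + 1), ENNReal.ofReal (μ l ((g₀⁻¹ * y) * (h : G)⁻¹)) := by
          intro h
          simp only [hFtdef]
          rw [mul_assoc]
        rw [tsum_congr e2]
        exact sum_translates_eq_one hpartE (g₀⁻¹ * y)
      calc ∑ l : Fin (s + 1), ∫⁻ y, ENNReal.ofReal (μ l y)
              * (∑' h : (Gseq n), Ft (g₀⁻¹ * (y * (h : G)⁻¹))) ∂ν.inv
          = ∑ l : Fin (s + 1), ∫⁻ y, ENNReal.ofReal (μ l y) ∂ν.inv := by
            refine Finset.sum_congr rfl fun l _ => lintegral_congr fun y => ?_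
            rw [hone y, mul_one]
        _ = ∫⁻ y, Ft y ∂ν.inv :=
            (lintegral_finset_sum _
              (fun l _ => (hcont l).measurable.ennreal_ofReal)).symm
        _ = V := hVdef.symm
    have hI1 : ∫⁻ x, Ft x ∂(m.inv) = c * V := by
      rw [hminv2, lintegral_smul_measure, hVdef, smul_eq_mul]
    have hc1 : c = 1 := by
      have hcv : c * V = 1 * V := by
        rw [one_mul, ← hI1, hI2]
      exact (ENNReal.mul_left_inj hVpos.ne' hVfin.ne).mp hcv
    have hmninv : m.inv = ν.inv := by
      rw [hminv2, hc1, one_smul]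
    have hfin : m = ν := by
      have h2 := congrArg Measure.inv hmninv
      rwa [Measure.inv_inv, Measure.inv_inv] at h2
    exact hfin
  haveI := hRI
  -- Step 2: build the Følner function from a fine partition of unity.
  have hden : (0 : ℝ) < 2 * ((s : ℝ) + 1) := by positivity
  obtain ⟨n, μ, hcont, hsupp, hicc, hdisj, hpart1, hinv⟩ :=
    hpart (ε / (2 * ((s : ℝ) + 1))) (by positivity) M hM
  set δ : ℝ := ε / (2 * ((s : ℝ) + 1)) with hδdef
  haveI hcnt : Countable (Gseq n) := countableSubgroup hcont hdisj hpart1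
  have hpartE := epart hicc hdisj hpart1
  set F : G → ℝ := fun x => ∑ l : Fin (s + 1), μ l x with hFdef
  have hFc : Continuous F := continuous_finset_sum _ (fun l _ => hcont l)
  have hFsupp : HasCompactSupport F := by
    refine HasCompactSupport.intro (isCompact_iUnion (fun l => hsupp l)) ?_
    intro x hx
    simp only [hFdef]
    refine Finset.sum_eq_zero fun l _ => ?_
    exact image_eq_zero_of_notMem_tsupport fun hmem => hx (Set.mem_iUnion.mpr ⟨l, hmem⟩)
  have hFint : Integrable F ν := hFc.integrable_of_hasCompactSupport hFsupp
  have hFnn : ∀ x, 0 ≤ F x := fun x => Finset.sum_nonneg fun l _ => (hicc l x).1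
  set I : ℝ := ∫ x, F x ∂ν with hIdef
  have hIpos : 0 < I := by
    rw [hIdef, integral_pos_iff_support_of_nonneg_ae
      (Filter.Eventually.of_forall hFnn) hFint]
    obtain ⟨l₀, h₀, hne0⟩ := exists_ne_zero hpart1
    have hsub : Function.support (μ l₀) ⊆ Function.support F := by
      intro x hx
      have hpos : 0 < μ l₀ x := lt_of_le_of_ne (hicc l₀ x).1 (Ne.symm hx)
      have hge : μ l₀ x ≤ F x :=
        Finset.single_le_sum (fun l _ => (hicc l x).1) (Finset.mem_univ l₀)
      exact Function.mem_support.mpr (ne_of_gt (lt_of_lt_of_le hpos hge))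
    refine lt_of_lt_of_le ?_ (measure_mono hsub)
    exact IsOpen.measure_pos ν (hcont l₀).isOpen_support
      ⟨(h₀ : G), Function.mem_support.mpr hne0⟩
  have hIeq : ENNReal.ofReal I = ∫⁻ x, ∑ l : Fin (s + 1), ENNReal.ofReal (μ l x) ∂ν := by
    rw [hIdef, MeasureTheory.ofReal_integral_eq_lintegral_ofReal hFint
      (Filter.Eventually.of_forall hFnn)]
    refine lintegral_congr fun x => ?_
    simp only [hFdef]
    exact ENNReal.ofReal_sum_of_nonneg (fun l _ => (hicc l x).1)
  have hKb : ∀ l : Fin (s + 1), ν (tsupport (μ l)) ≤ ENNReal.ofReal I := by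
    intro l
    calc ν (tsupport (μ l))
        ≤ ∑ l' : Fin (s + 1), ∫⁻ y, ENNReal.ofReal (μ l' y) ∂ν :=
          measure_tsupport_le ν hcont hdisj hpartE l
      _ = ∫⁻ x, ∑ l' : Fin (s + 1), ENNReal.ofReal (μ l' x) ∂ν :=
          (lintegral_finset_sum _
            (fun l' _ => (hcont l').measurable.ennreal_ofReal)).symm
      _ = ENNReal.ofReal I := hIeq.symm
  refine ⟨fun x => F x / I, hFint.div_const I, ?_, ?_, ?_⟩
  · exact Filter.Eventually.of_forall fun x => div_nonneg (hFnn x) hIpos.le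
  · have habs : ∀ x, |F x / I| = F x / I := fun x =>
      abs_of_nonneg (div_nonneg (hFnn x) hIpos.le)
    calc (∫ x, |F x / I| ∂ν) = ∫ x, F x / I ∂ν :=
          integral_congr_ae (Filter.Eventually.of_forall habs)
      _ = I / I := by rw [integral_div, hIdef]
      _ = 1 := div_self hIpos.ne'
  · intro g hg
    have hintg : ∀ l : Fin (s + 1), Integrable (fun x => μ l (g * x)) ν := fun l =>
      ((hcont l).comp (continuous_mul_left g)).integrable_of_hasCompactSupport
        ((hsupp l).comp_homeomorph (Homeomorph.mulLeft g))
    have hFg : Integrable (fun x => F (g * x)) ν :=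
      (hFc.comp (continuous_mul_left g)).integrable_of_hasCompactSupport
        (hFsupp.comp_homeomorph (Homeomorph.mulLeft g))
    have hintl : ∀ l : Fin (s + 1), Integrable (fun x => |μ l (g * x) - μ l x|) ν :=
      fun l => ((hintg l).sub ((hcont l).integrable_of_hasCompactSupport (hsupp l))).abs
    have hterm : ∀ l : Fin (s + 1), (∫ x, |μ l (g * x) - μ l x| ∂ν) ≤ δ * (2 * I) := by
      intro l
      have hKm : MeasurableSet (tsupport (μ l)) := (isClosed_tsupport _).measurableSet
      set S : Set G := tsupport (μ l) ∪ (fun x => g * x) ⁻¹' tsupport (μ l) with hSdef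
      have hSm : MeasurableSet S := hKm.union (hKm.preimage (measurable_const_mul g))
      have hSle : ν S ≤ ENNReal.ofReal (2 * I) := by
        calc ν S ≤ ν (tsupport (μ l)) + ν ((fun x => g * x) ⁻¹' tsupport (μ l)) :=
              measure_union_le _ _
          _ = ν (tsupport (μ l)) + ν (tsupport (μ l)) := by
              rw [measure_preimage_mul]
          _ ≤ ENNReal.ofReal I + ENNReal.ofReal I := add_le_add (hKb l) (hKb l)
          _ = ENNReal.ofReal (2 * I) := by
              rw [← ENNReal.ofReal_add hIpos.le hIpos.le]
              ring_nf
      have hSfin : ν S < ⊤ :=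
        lt_of_le_of_lt hSle ENNReal.ofReal_lt_top
      have hpt : ∀ x, |μ l (g * x) - μ l x| ≤ S.indicator (fun _ => δ) x := by
        intro x
        by_cases hx : x ∈ S
        · rw [Set.indicator_of_mem hx, abs_sub_comm]
          exact hinv l g hg x
        · rw [Set.indicator_of_notMem hx]
          have hx1 : x ∉ tsupport (μ l) := fun h => hx (Or.inl h)
          have hx2 : g * x ∈ tsupport (μ l) → False := fun h => hx (Or.inr h)
          rw [image_eq_zero_of_notMem_tsupport hx1,
            image_eq_zero_of_notMem_tsupport hx2]
          simp
      have hindint : Integrable (S.indicator (fun _ => δ)) ν := by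
        rw [integrable_indicator_iff hSm]
        exact integrableOn_const hSfin.ne
      calc (∫ x, |μ l (g * x) - μ l x| ∂ν)
          ≤ ∫ x, S.indicator (fun _ => δ) x ∂ν := integral_mono (hintl l) hindint hpt
        _ = (ν S).toReal * δ := by
            rw [integral_indicator_const _ hSm, smul_eq_mul, measureReal_def]
        _ ≤ (2 * I) * δ := by
            have h2I : (0:ℝ) ≤ 2 * I := by positivity
            have := ENNReal.toReal_le_of_le_ofReal h2I hSle
            have hδnn : 0 ≤ δ := by
              rw [hδdef]; positivity
            exact mul_le_mul_of_nonneg_right this hδnn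
        _ = δ * (2 * I) := by ring
    have hptF : ∀ x, |F (g * x) / I - F x / I| = |F (g * x) - F x| / I := by
      intro x
      rw [div_sub_div_same, abs_div, abs_of_pos hIpos]
    calc (∫ x, |F (g * x) / I - F x / I| ∂ν)
        = ∫ x, |F (g * x) - F x| / I ∂ν :=
          integral_congr_ae (Filter.Eventually.of_forall hptF)
      _ = (∫ x, |F (g * x) - F x| ∂ν) / I := integral_div I _
      _ ≤ (((s : ℝ) + 1) * (δ * (2 * I))) / I := by
          rw [div_le_div_iff_of_pos_right hIpos]
          calc (∫ x, |F (g * x) - F x| ∂ν)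
              ≤ ∫ x, ∑ l : Fin (s + 1), |μ l (g * x) - μ l x| ∂ν := by
                refine integral_mono (hFg.sub hFint).abs
                  (integrable_finset_sum _ fun l _ => hintl l) ?_
                intro x
                simp only [hFdef]
                rw [← Finset.sum_sub_distrib]
                exact Finset.abs_sum_le_sum_abs _ _
            _ = ∑ l : Fin (s + 1), ∫ x, |μ l (g * x) - μ l x| ∂ν :=
                integral_finset_sum _ (fun l _ => hintl l)
            _ ≤ ∑ _l : Fin (s + 1), δ * (2 * I) :=
                Finset.sum_le_sum fun l _ => hterm l
            _ = ((s : ℝ) + 1) * (δ * (2 * I)) := by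
                rw [Finset.sum_const, Finset.card_univ, Fintype.card_fin, nsmul_eq_mul]
                push_cast
                ring
      _ = ε := by
          rw [hδdef]
          field_simp
end

section
/- Let A be a (not necessarily unital) C*-algebra, let B be a C*-subalgebra of A, and let (f_n)_{n∈ℕ} be a sequence in B with 0 ≤ f_n, ‖f_n‖ ≤ 1, f_n f_{n+1} = f_n for all n, and ‖f_n a − a‖ → 0 as n → ∞ for every a ∈ A. Suppose that for every positive element b ∈ A and every δ > 0 there exists y ∈ A with ‖y y* − b‖ < δ and ‖y²‖ < δ. Let d ∈ ℕ. Then for every positive element b ∈ B and every ε with 0 < ε < 1 there exist positive contractions e, e₀, …, e_d, c₀, …, c_d ∈ B and elements y₀, …, y_d ∈ A such that for all i, j ∈ {0, …, d}: ‖e b − b‖ < ε, e_i e = e, ‖y_i y_i* − e_i‖ < ε, ‖y_i* y_i c_i − y_i* y_i‖ < ε, ‖y_i²‖ < ε, e c_i = 0, (e_i + c_i) e_i = e_i, and c_i c_j = 0 whenever i ≠ j. -/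
open Filter Unitization

section Aux

variable {A : Type*} [NonUnitalCStarAlgebra A]

lemma aux_selfAdjoint {a : A} (h : ∃ x : A, a = star x * x) : IsSelfAdjoint a := by
  obtain ⟨x, rfl⟩ := h; exact IsSelfAdjoint.star_mul_self x

lemma aux_key (p q : A) (hp : ∃ x : A, p = star x * x) (hq : IsSelfAdjoint q)
    (hpn : ‖p‖ ≤ 1) (hqn : ‖q‖ ≤ 1)
    (h1 : q * p = p) (h2 : p * q = p) :
    (∃ x : A, q * q - p = star x * x) ∧ ‖q * q - p‖ ≤ 1 := by
  let _ : PartialOrder (Unitization ℂ A) := CStarAlgebra.spectralOrder _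
  have _ : StarOrderedRing (Unitization ℂ A) := CStarAlgebra.spectralOrderedRing _
  set P : Unitization ℂ A := (p : Unitization ℂ A) with hPdef
  set Q : Unitization ℂ A := (q : Unitization ℂ A) with hQdef
  have hP : 0 ≤ P := by
    obtain ⟨x, hx⟩ := hp
    rw [hPdef, hx, Unitization.inr_mul, Unitization.inr_star]
    exact star_mul_self_nonneg _
  have hPn : ‖P‖ ≤ 1 := by rwa [hPdef, Unitization.norm_inr]
  have hP1 : P ≤ 1 := (CStarAlgebra.norm_le_one_iff_of_nonneg P hP).mp hPn
  have h1P : (0 : Unitization ℂ A) ≤ 1 - P := sub_nonneg.mpr hP1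
  set R : Unitization ℂ A := CFC.sqrt (1 - P) with hRdef
  have hR0 : 0 ≤ R := CFC.sqrt_nonneg _
  have hRsa : IsSelfAdjoint R := .of_nonneg hR0
  have hRR : R * R = 1 - P := CFC.sqrt_mul_sqrt_self _ h1P
  have hQsa : IsSelfAdjoint Q := (Unitization.isSelfAdjoint_inr (R := ℂ)).mpr hq
  have hQP : Q * P = P := by rw [hPdef, hQdef, ← Unitization.inr_mul, h1]
  have hPQ : P * Q = P := by rw [hPdef, hQdef, ← Unitization.inr_mul, h2]
  set x' : Unitization ℂ A := R * Q with hx'def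
  have hx'fst : x'.fst = 0 := by
    rw [hx'def, Unitization.fst_mul, hQdef, Unitization.fst_inr, mul_zero]
  have hxx : ((x'.snd : A) : Unitization ℂ A) = x' := by
    refine Unitization.ext ?_ ?_
    · rw [Unitization.fst_inr, hx'fst]
    · rw [Unitization.snd_inr]
  have hstarx : star x' * x' = Q * Q - P := by
    rw [hx'def, star_mul, hRsa.star_eq, hQsa.star_eq]
    calc Q * R * (R * Q) = Q * (R * R) * Q := by noncomm_ring
      _ = Q * (1 - P) * Q := by rw [hRR]
      _ = Q * Q - P := by rw [mul_sub, mul_one, sub_mul, hQP, hPQ]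
  have hQQ : ((q * q - p : A) : Unitization ℂ A) = Q * Q - P := by
    rw [Unitization.inr_sub, Unitization.inr_mul]
  constructor
  · refine ⟨x'.snd, ?_⟩
    apply Unitization.inr_injective (R := ℂ)
    rw [hQQ, Unitization.inr_mul, Unitization.inr_star, hxx, hstarx]
  · have hnorm : ‖q * q - p‖ = ‖x'‖ * ‖x'‖ := by
      rw [← Unitization.norm_inr (𝕜 := ℂ), hQQ, ← hstarx, CStarRing.norm_star_mul_self]
    have hx'le : ‖x'‖ ≤ ‖R‖ := by
      calc ‖x'‖ ≤ ‖R‖ * ‖Q‖ := norm_mul_le _ _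
        _ ≤ ‖R‖ * 1 := by
            have : ‖Q‖ ≤ 1 := by rwa [hQdef, Unitization.norm_inr]
            exact mul_le_mul_of_nonneg_left this (norm_nonneg _)
        _ = ‖R‖ := mul_one _
    have hRn : ‖R‖ * ‖R‖ ≤ 1 := by
      have h1 : ‖R * R‖ ≤ 1 := by
        rw [hRR]
        refine (CStarAlgebra.norm_le_one_iff_of_nonneg _ h1P).mpr ?_
        exact sub_le_self _ hP
      calc ‖R‖ * ‖R‖ = ‖star R * R‖ := (CStarRing.norm_star_mul_self).symm
        _ = ‖R * R‖ := by rw [hRsa.star_eq]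
        _ ≤ 1 := h1
    rw [hnorm]
    nlinarith [norm_nonneg x', norm_nonneg R, hx'le]

end Aux

/-- (Lemma 8.2, "only if" direction.) Let `A` be a C*-algebra, `B ⊆ A` a
C*-subalgebra containing an approximate identity `(fₙ)` of `A` with `fₙ fₙ₊₁ = fₙ`. If `A`
satisfies the Hjelmborg–Rørdam local characterization of stability, then for every positive
`b ∈ B` and `0 < ε < 1` there exist positive contractions `e, e₀, …, e_d, c₀, …, c_d ∈ B`
and `y₀, …, y_d ∈ A` satisfying the listed relations. -/
theorem stable_witnesses_in_subalgebra
    {A : Type*} [NonUnitalCStarAlgebra A]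
    (B : NonUnitalStarSubalgebra ℂ A) (hB : IsClosed (B : Set A))
    (f : ℕ → A) (hfB : ∀ n, f n ∈ B)
    (hfpos : ∀ n, ∃ x : A, f n = star x * x) (hfnorm : ∀ n, ‖f n‖ ≤ 1)
    (hfchain : ∀ n, f n * f (n + 1) = f n)
    (hfapprox : ∀ a : A, Tendsto (fun n => ‖f n * a - a‖) atTop (nhds 0))
    (hstable : ∀ b : A, (∃ x : A, b = star x * x) →
      ∀ δ : ℝ, 0 < δ → ∃ y : A, ‖y * star y - b‖ < δ ∧ ‖y * y‖ < δ)
    (d : ℕ) :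
    ∀ b ∈ B, (∃ x : A, b = star x * x) → ∀ ε : ℝ, 0 < ε → ε < 1 →
      ∃ e : A, ∃ es cs y : Fin (d + 1) → A,
        (e ∈ B ∧ (∃ x : A, e = star x * x) ∧ ‖e‖ ≤ 1) ∧
        (∀ i, es i ∈ B ∧ (∃ x : A, es i = star x * x) ∧ ‖es i‖ ≤ 1) ∧
        (∀ i, cs i ∈ B ∧ (∃ x : A, cs i = star x * x) ∧ ‖cs i‖ ≤ 1) ∧
        ‖e * b - b‖ < ε ∧
        (∀ i, es i * e = e) ∧
        (∀ i, ‖y i * star (y i) - es i‖ < ε) ∧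
        (∀ i, ‖star (y i) * y i * cs i - star (y i) * y i‖ < ε) ∧
        (∀ i, ‖y i * y i‖ < ε) ∧
        (∀ i, e * cs i = 0) ∧
        (∀ i, (es i + cs i) * es i = es i) ∧
        (∀ i j, i ≠ j → cs i * cs j = 0) := by
  intro b hbB hbpos ε hε hε1
  have hsa : ∀ n, IsSelfAdjoint (f n) := fun n => aux_selfAdjoint (hfpos n)
  have hsqnorm : ∀ t : ℕ, ‖f t * f t‖ ≤ 1 := fun t =>
    (norm_mul_le _ _).trans (mul_le_one₀ (hfnorm t) (norm_nonneg _) (hfnorm t))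
  have hlt : ∀ a c : ℕ, a < c → f a * f c = f a := by
    intro a c hac
    induction c with
    | zero => omega
    | succ c ih =>
      rcases Nat.lt_succ_iff_lt_or_eq.mp hac with h | h
      · calc f a * f (c + 1) = (f a * f c) * f (c + 1) := by rw [ih h]
          _ = f a * (f c * f (c + 1)) := mul_assoc _ _ _
          _ = f a * f c := by rw [hfchain c]
          _ = f a := ih h
      · subst h; exact hfchain a
  have hlt' : ∀ a c : ℕ, a < c → f c * f a = f a := by
    intro a c hac
    have h := congrArg star (hlt a c hac)
    rwa [star_mul, (hsa a).star_eq, (hsa c).star_eq] at h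
  have habsL : ∀ a c : ℕ, a < c → (f c * f c) * (f a * f a) = f a * f a := by
    intro a c h
    calc (f c * f c) * (f a * f a) = f c * ((f c * f a) * f a) := by
          rw [mul_assoc, mul_assoc]
      _ = f c * (f a * f a) := by rw [hlt' a c h]
      _ = (f c * f a) * f a := by rw [mul_assoc]
      _ = f a * f a := by rw [hlt' a c h]
  have habsR : ∀ a c : ℕ, a < c → (f a * f a) * (f c * f c) = f a * f a := by
    intro a c h
    calc (f a * f a) * (f c * f c) = f a * ((f a * f c) * f c) := by
          rw [mul_assoc, mul_assoc]
      _ = f a * f a := by rw [hlt a c h, hlt a c h]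
  have habsL' : ∀ a c : ℕ, a < c → (f c * f c) * f a = f a := by
    intro a c h
    rw [mul_assoc, hlt' a c h, hlt' a c h]
  have habs : ∀ a c : ℕ, a < c → f a * (f c * f c) = f a := by
    intro a c h
    rw [← mul_assoc, hlt a c h, hlt a c h]
  -- choose n
  obtain ⟨n, hn⟩ : ∃ n, ‖f n * b - b‖ < ε := ((hfapprox b).eventually_lt_const hε).exists
  -- δ
  set δ : ℝ := ε / 8 with hδdef
  have hδ : 0 < δ := by positivity
  -- choose Y
  have hYex : ∀ k : ℕ, ∃ y : A, ‖y * star y - f k * f k‖ < δ ∧ ‖y * y‖ < δ := fun k =>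
    hstable (f k * f k) ⟨f k, by rw [(hsa k).star_eq]⟩ δ hδ
  choose Y hY1 hY2 using hYex
  -- choose N
  have hNex : ∀ k : ℕ, ∃ N : ℕ, ∀ m ≥ N,
      ‖f m * (star (Y k) * Y k) - star (Y k) * Y k‖ < ε / 4 := by
    intro k
    have h := (hfapprox (star (Y k) * Y k)).eventually_lt_const (by positivity : (0:ℝ) < ε / 4)
    rwa [eventually_atTop] at h
  choose N hN using hNex
  set M : ℕ → ℕ := fun k => max (k + 1) (N k) with hMdef
  have hMk : ∀ k, k < M k := fun k => lt_of_lt_of_le (Nat.lt_succ_self k) (le_max_left _ _)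
  have hMapp : ∀ k, ‖f (M k + 1) * (star (Y k) * Y k) - star (Y k) * Y k‖ < ε / 4 := fun k =>
    hN k _ (le_trans (le_max_right _ _) (Nat.le_succ_of_le le_rfl))
  -- the index sequence
  set K : ℕ → ℕ := fun i => Nat.rec (n + 1) (fun _ prev => M prev + 2) i with hKdef
  have hKs : ∀ i, K (i + 1) = M (K i) + 2 := fun i => rfl
  have hKstep : ∀ i, K i < K (i + 1) := fun i => by
    have h := hMk (K i); rw [hKs]; omega
  have hKmono : StrictMono K := strictMono_nat_of_lt_succ hKstep
  have hKn : ∀ i : ℕ, n < K i := fun i =>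
    lt_of_lt_of_le (Nat.lt_succ_self n) ((hKmono.le_iff_le.mpr (Nat.zero_le i)))
  have hKM : ∀ i : ℕ, K i < M (K i) + 1 := fun i => (hMk (K i)).trans (Nat.lt_succ_self _)
  have hMltK : ∀ i j : ℕ, i < j → M (K i) + 1 < K j := by
    intro i j h
    have h1 : M (K i) + 1 < K (i + 1) := by rw [hKs]; omega
    exact lt_of_lt_of_le h1 (hKmono.monotone h)
  -- the key positivity facts for cs
  have hcs : ∀ i : ℕ,
      (∃ x : A, f (M (K i) + 1) * f (M (K i) + 1) - f (K i) * f (K i) = star x * x) ∧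
      ‖f (M (K i) + 1) * f (M (K i) + 1) - f (K i) * f (K i)‖ ≤ 1 := by
    intro i
    refine aux_key (f (K i) * f (K i)) (f (M (K i) + 1)) ⟨f (K i), by rw [(hsa _).star_eq]⟩
      (hsa _) (hsqnorm _) (hfnorm _) ?_ ?_
    · rw [← mul_assoc, hlt' (K i) (M (K i) + 1) (hKM i)]
    · rw [mul_assoc, hlt (K i) (M (K i) + 1) (hKM i)]
  refine ⟨f n, fun i => f (K i.1) * f (K i.1),
    fun i => f (M (K i.1) + 1) * f (M (K i.1) + 1) - f (K i.1) * f (K i.1),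
    fun i => Y (K i.1), ⟨hfB n, hfpos n, hfnorm n⟩, ?_, ?_, hn, ?_, ?_, ?_, ?_, ?_, ?_, ?_⟩
  · intro i
    exact ⟨mul_mem (hfB _) (hfB _), ⟨f (K i.1), by rw [(hsa _).star_eq]⟩, hsqnorm _⟩
  · intro i
    exact ⟨sub_mem (mul_mem (hfB _) (hfB _)) (mul_mem (hfB _) (hfB _)),
      (hcs i.1).1, (hcs i.1).2⟩
  · exact fun i => habsL' n (K i.1) (hKn i.1)
  · exact fun i => lt_trans (hY1 (K i.1)) (by rw [hδdef]; linarith)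
  · -- main estimate
    intro i
    set k := K i.1 with hk
    set m₁ := M k + 1 with hm
    set y := Y k with hy
    set a : A := star y * y with ha
    have hysa : IsSelfAdjoint a := IsSelfAdjoint.star_mul_self y
    have h1 : ‖f m₁ * a - a‖ < ε / 4 := hMapp k
    have h1' : ‖a * f m₁ - a‖ < ε / 4 := by
      have heq : a * f m₁ - a = star (f m₁ * a - a) := by
        rw [star_sub, star_mul, hysa.star_eq, (hsa m₁).star_eq]
      rw [heq, norm_star]; exact h1
    have h2 : ‖a * (f m₁ * f m₁) - a‖ ≤ 2 * ‖a * f m₁ - a‖ := by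
      have hd : a * (f m₁ * f m₁) - a = (a * f m₁ - a) * f m₁ + (a * f m₁ - a) := by
        noncomm_ring
      calc ‖a * (f m₁ * f m₁) - a‖ = ‖(a * f m₁ - a) * f m₁ + (a * f m₁ - a)‖ := by rw [hd]
        _ ≤ ‖(a * f m₁ - a) * f m₁‖ + ‖a * f m₁ - a‖ := norm_add_le _ _
        _ ≤ ‖a * f m₁ - a‖ * ‖f m₁‖ + ‖a * f m₁ - a‖ :=
            add_le_add_left (norm_mul_le _ _) _
        _ ≤ ‖a * f m₁ - a‖ * 1 + ‖a * f m₁ - a‖ := by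
            exact add_le_add_left (mul_le_mul_of_nonneg_left (hfnorm m₁) (norm_nonneg _)) _
        _ = 2 * ‖a * f m₁ - a‖ := by ring
    have hynorm : ‖y‖ * ‖y‖ ≤ 1 + δ := by
      rw [← CStarRing.norm_self_mul_star]
      calc ‖y * star y‖ = ‖(y * star y - f k * f k) + f k * f k‖ := by rw [sub_add_cancel]
        _ ≤ ‖y * star y - f k * f k‖ + ‖f k * f k‖ := norm_add_le _ _
        _ ≤ δ + 1 := add_le_add (le_of_lt (hY1 k)) (hsqnorm k)
        _ = 1 + δ := by ring
    have hanorm : ‖a‖ ≤ 1 + δ := by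
      rw [ha, CStarRing.norm_star_mul_self]; exact hynorm
    have h3 : ‖a * (f k * f k)‖ ≤ (1 + δ) * δ + (1 + δ) * δ := by
      have hsplit : a * (f k * f k) =
          a * (f k * f k - y * star y) + star y * (y * y) * star y := by
        rw [ha]; noncomm_ring
      calc ‖a * (f k * f k)‖
          ≤ ‖a * (f k * f k - y * star y)‖ + ‖star y * (y * y) * star y‖ := by
            rw [hsplit]; exact norm_add_le _ _
        _ ≤ ‖a‖ * ‖f k * f k - y * star y‖ + ‖star y‖ * ‖y * y‖ * ‖star y‖ := by
            refine add_le_add (norm_mul_le _ _) ?_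
            exact (norm_mul_le _ _).trans
              (mul_le_mul_of_nonneg_right (norm_mul_le _ _) (norm_nonneg _))
        _ ≤ (1 + δ) * δ + (1 + δ) * δ := by
            have e1 : ‖f k * f k - y * star y‖ ≤ δ := by
              rw [norm_sub_rev]; exact le_of_lt (hY1 k)
            have e2 : ‖y * y‖ ≤ δ := le_of_lt (hY2 k)
            have e3 : ‖star y‖ = ‖y‖ := norm_star y
            have e4 : (0:ℝ) ≤ ‖a‖ := norm_nonneg _
            have e5 : (0:ℝ) ≤ ‖y‖ := norm_nonneg _
            rw [e3]
            nlinarith [hanorm, hynorm]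
    have hdecomp : a * (f m₁ * f m₁ - f k * f k) - a =
        (a * (f m₁ * f m₁) - a) - a * (f k * f k) := by noncomm_ring
    calc ‖a * (f m₁ * f m₁ - f k * f k) - a‖
        = ‖(a * (f m₁ * f m₁) - a) - a * (f k * f k)‖ := by rw [hdecomp]
      _ ≤ ‖a * (f m₁ * f m₁) - a‖ + ‖a * (f k * f k)‖ := norm_sub_le _ _
      _ ≤ 2 * ‖a * f m₁ - a‖ + ((1 + δ) * δ + (1 + δ) * δ) := add_le_add h2 h3
      _ < ε := by rw [hδdef] at *; nlinarith [h1']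
  · exact fun i => lt_trans (hY2 (K i.1)) (by rw [hδdef]; linarith)
  · intro i
    have h1 : n < M (K i.1) + 1 := lt_trans (hKn i.1) (hKM i.1)
    rw [mul_sub, habs n _ h1, habs n _ (hKn i.1), sub_self]
  · intro i
    have heq : f (K i.1) * f (K i.1) +
        (f (M (K i.1) + 1) * f (M (K i.1) + 1) - f (K i.1) * f (K i.1)) =
        f (M (K i.1) + 1) * f (M (K i.1) + 1) := by abel
    rw [heq, habsL (K i.1) (M (K i.1) + 1) (hKM i.1)]
  · intro i j hij
    have hvij : i.1 ≠ j.1 := fun h => hij (Fin.val_injective h)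
    rcases lt_or_gt_of_ne hvij with h | h
    · -- i < j : use habsR
      have c1 : M (K i.1) + 1 < K j.1 := hMltK _ _ h
      have c2 : M (K i.1) + 1 < M (K j.1) + 1 := c1.trans (hKM j.1)
      have c3 : K i.1 < K j.1 := hKmono h
      have c4 : K i.1 < M (K j.1) + 1 := c3.trans (hKM j.1)
      rw [sub_mul, mul_sub, mul_sub,
        habsR _ _ c2, habsR _ _ c1, habsR _ _ c4, habsR _ _ c3]
      abel
    · -- j < i : use habsL
      have c1 : M (K j.1) + 1 < K i.1 := hMltK _ _ h
      have c2 : M (K j.1) + 1 < M (K i.1) + 1 := c1.trans (hKM i.1)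
      have c3 : K j.1 < K i.1 := hKmono h
      have c4 : K j.1 < M (K i.1) + 1 := c3.trans (hKM i.1)
      rw [sub_mul, mul_sub, mul_sub,
        habsL _ _ c2, habsL _ _ c4, habsL _ _ c1, habsL _ _ c3]
      abel
end

section
/- Let A be a (not necessarily unital) C*-algebra, let B be a C*-subalgebra of A, and let (f_n)_{n∈ℕ} be a sequence in B with 0 ≤ f_n, ‖f_n‖ ≤ 1, f_n f_{n+1} = f_n for all n, and ‖f_n a − a‖ → 0 and ‖a f_n − a‖ → 0 as n → ∞ for every a ∈ A. Let d ∈ ℕ, and suppose that for every positive element b ∈ B and every ε > 0 there exist positive contractions e, e₀, …, e_d, c₀, …, c_d ∈ B and elements y₀, …, y_d ∈ A such that for all i, j ∈ {0, …, d}: ‖e b − b‖ < ε, e_i e = e, ‖y_i y_i* − e_i‖ < ε, ‖y_i* y_i c_i − y_i* y_i‖ < ε, ‖y_i²‖ < ε, e c_i = 0, (e_i + c_i) e_i = e_i, and c_i c_j = 0 whenever i ≠ j. Then for every positive element b ∈ A and every ε > 0 there exists y ∈ A with ‖y y* − b‖ < ε and ‖y²‖ < ε. -/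
open Filter

private lemma aux_mul_norm_le {A : Type*} [NonUnitalCStarAlgebra A] {a x : A} {ra rx : ℝ}
    (ha : ‖a‖ ≤ ra) (hx : ‖x‖ ≤ rx) : ‖a * x‖ ≤ ra * rx :=
  le_trans (norm_mul_le a x) (mul_le_mul ha hx (norm_nonneg x) ((norm_nonneg a).trans ha))

private lemma aux_norm_le_sqrt {A : Type*} [NonUnitalCStarAlgebra A] {x : A} {c : ℝ}
    (h : ‖x * star x‖ ≤ c) : ‖x‖ ≤ Real.sqrt c := by
  rw [← Real.sqrt_mul_self (norm_nonneg x)]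
  exact Real.sqrt_le_sqrt (by rwa [← CStarRing.norm_self_mul_star])

private lemma aux_norm_le_sqrt' {A : Type*} [NonUnitalCStarAlgebra A] {x : A} {c : ℝ}
    (h : ‖star x * x‖ ≤ c) : ‖x‖ ≤ Real.sqrt c := by
  rw [← Real.sqrt_mul_self (norm_nonneg x)]
  exact Real.sqrt_le_sqrt (by rwa [← CStarRing.norm_star_mul_self])

set_option maxHeartbeats 1000000 in
/-- (Lemma 8.2, "if" direction.) Let `A` be a C*-algebra, `B ⊆ A` a
C*-subalgebra containing an approximate identity `(fₙ)` of `A` with `fₙ fₙ₊₁ = fₙ`. If for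
every positive `b ∈ B` and `ε > 0` there exist positive contractions
`e, e₀, …, e_d, c₀, …, c_d ∈ B` and `y₀, …, y_d ∈ A` satisfying the listed relations, then
`A` satisfies the Hjelmborg–Rørdam local characterization of stability. -/
theorem stable_of_witnesses_in_subalgebra
    {A : Type*} [NonUnitalCStarAlgebra A]
    (B : NonUnitalStarSubalgebra ℂ A) (hB : IsClosed (B : Set A))
    (f : ℕ → A) (hfB : ∀ n, f n ∈ B)
    (hfpos : ∀ n, ∃ x : A, f n = star x * x) (hfnorm : ∀ n, ‖f n‖ ≤ 1)
    (hfchain : ∀ n, f n * f (n + 1) = f n)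
    (hfapprox : ∀ a : A, Tendsto (fun n => ‖f n * a - a‖) atTop (nhds 0))
    (hfapprox' : ∀ a : A, Tendsto (fun n => ‖a * f n - a‖) atTop (nhds 0))
    (d : ℕ)
    (hwit : ∀ b ∈ B, (∃ x : A, b = star x * x) → ∀ ε : ℝ, 0 < ε →
      ∃ e : A, ∃ es cs y : Fin (d + 1) → A,
        (e ∈ B ∧ (∃ x : A, e = star x * x) ∧ ‖e‖ ≤ 1) ∧
        (∀ i, es i ∈ B ∧ (∃ x : A, es i = star x * x) ∧ ‖es i‖ ≤ 1) ∧
        (∀ i, cs i ∈ B ∧ (∃ x : A, cs i = star x * x) ∧ ‖cs i‖ ≤ 1) ∧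
        ‖e * b - b‖ < ε ∧
        (∀ i, es i * e = e) ∧
        (∀ i, ‖y i * star (y i) - es i‖ < ε) ∧
        (∀ i, ‖star (y i) * y i * cs i - star (y i) * y i‖ < ε) ∧
        (∀ i, ‖y i * y i‖ < ε) ∧
        (∀ i, e * cs i = 0) ∧
        (∀ i, (es i + cs i) * es i = es i) ∧
        (∀ i j, i ≠ j → cs i * cs j = 0)) :
    ∀ b : A, (∃ x : A, b = star x * x) → ∀ ε : ℝ, 0 < ε →
      ∃ y : A, ‖y * star y - b‖ < ε ∧ ‖y * y‖ < ε := by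
  intro b hb ε hε
  obtain ⟨x, hbx⟩ := hb
  set R : ℝ := ‖b‖ + 2 with hRdef
  have hR2 : (2 : ℝ) ≤ R := by have := norm_nonneg b; simp only [hRdef]; linarith
  have hR0 : (0 : ℝ) < R := by linarith
  -- the square root of b, via the real non-unital continuous functional calculus
  have hbsa : IsSelfAdjoint b := hbx ▸ IsSelfAdjoint.star_mul_self x
  have hq : ∀ t ∈ quasispectrum ℝ b, 0 ≤ t := by
    intro t ht
    rw [Unitization.quasispectrum_eq_spectrum_inr' ℝ ℂ b] at ht
    have hbr : (b : Unitization ℂ A) =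
        star (x : Unitization ℂ A) * (x : Unitization ℂ A) := by
      rw [hbx, Unitization.inr_mul, Unitization.inr_star]
    rw [hbr] at ht
    exact spectrum_star_mul_self_nonneg t ht
  set s : A := cfcₙ Real.sqrt b with hsdef
  have hs_sa' : IsSelfAdjoint s := cfcₙ_predicate Real.sqrt b
  have hs_sa : star s = s := hs_sa'.star_eq
  have hss : s * s = b := by
    have h1 : cfcₙ (fun t : ℝ => Real.sqrt t * Real.sqrt t) b = s * s := cfcₙ_mul Real.sqrt Real.sqrt b
      (Real.continuous_sqrt.continuousOn) Real.sqrt_zero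
      (Real.continuous_sqrt.continuousOn) Real.sqrt_zero
    have h2 : cfcₙ (fun t : ℝ => Real.sqrt t * Real.sqrt t) b = cfcₙ (id : ℝ → ℝ) b :=
      cfcₙ_congr fun t ht => Real.mul_self_sqrt (hq t ht)
    rw [← h1, h2, cfcₙ_id ℝ b]
  have hsnorm : ‖s‖ ≤ R := by
    have h1 : ‖s‖ * ‖s‖ = ‖b‖ := by rw [← CStarRing.norm_star_mul_self, hs_sa, hss]
    nlinarith [norm_nonneg s, sq_nonneg (‖s‖ - R)]
  -- choice of δ
  set δ : ℝ := min 1 ((ε / (9 * R ^ 2)) ^ 2) with hδdef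
  have hδ0 : (0 : ℝ) < δ := lt_min one_pos (by positivity)
  have hδ1 : δ ≤ 1 := min_le_left _ _
  have hsd : Real.sqrt δ ≤ ε / (9 * R ^ 2) := by
    calc Real.sqrt δ ≤ Real.sqrt ((ε / (9 * R ^ 2)) ^ 2) :=
          Real.sqrt_le_sqrt (min_le_right _ _)
      _ = ε / (9 * R ^ 2) := Real.sqrt_sq (by positivity)
  have hδsd : δ ≤ Real.sqrt δ := by
    nlinarith [Real.sq_sqrt hδ0.le, Real.sqrt_nonneg δ, sq_nonneg (Real.sqrt δ - 1),
      sq_nonneg (Real.sqrt δ + 1)]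
  clear_value s δ R
  -- choose m with f m close to the identity on b
  obtain ⟨m, hm⟩ := ((hfapprox b).eventually (gt_mem_nhds hδ0)).exists
  -- apply the hypothesis to f m
  obtain ⟨e, es, cs, y, ⟨-, hepos, henorm⟩, heslist, hcslist, hef, hese, hyy, hyyc, hysq,
    hec, -, -⟩ := hwit (f m) (hfB m) (hfpos m) δ hδ0
  have hesa : star e = e := by
    obtain ⟨z, hz⟩ := hepos; rw [hz, star_mul, star_star]
  have he0sa : star (es 0) = es 0 := by
    obtain ⟨z, hz⟩ := (heslist 0).2.1; rw [hz, star_mul, star_star]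
  have hc0sa : star (cs 0) = cs 0 := by
    obtain ⟨z, hz⟩ := (hcslist 0).2.1; rw [hz, star_mul, star_star]
  have he0n : ‖es 0‖ ≤ 1 := (heslist 0).2.2
  have hc0n : ‖cs 0‖ ≤ 1 := (hcslist 0).2.2
  -- e acts approximately as identity on b
  have hEb : ‖e * b - b‖ ≤ δ * R := by
    have hsplit : e * b - b = e * (b - f m * b) + (e * f m - f m) * b + (f m * b - b) := by
      noncomm_ring
    have t1 : ‖e * (b - f m * b)‖ ≤ 1 * δ := by
      refine aux_mul_norm_le henorm ?_
      rw [norm_sub_rev]; exact hm.le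
    have t2 : ‖(e * f m - f m) * b‖ ≤ δ * ‖b‖ :=
      aux_mul_norm_le hef.le le_rfl
    calc ‖e * b - b‖ ≤ ‖e * (b - f m * b)‖ + ‖(e * f m - f m) * b‖ + ‖f m * b - b‖ := by
          rw [hsplit]; exact norm_add₃_le
      _ ≤ 1 * δ + δ * ‖b‖ + δ := by linarith [hm.le]
      _ = δ * R := by rw [hRdef]; ring
  -- ‖s - e s‖ is small
  have hts : ‖s - e * s‖ ≤ R * Real.sqrt δ := by
    have hexp : (s - e * s) * star (s - e * s) = (b - e * b) - (b - e * b) * e := by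
      rw [star_sub, star_mul, hs_sa, hesa, ← hss]; noncomm_ring
    have h1 : ‖(s - e * s) * star (s - e * s)‖ ≤ R * R * δ := by
      rw [hexp]
      calc ‖(b - e * b) - (b - e * b) * e‖ ≤ ‖b - e * b‖ + ‖(b - e * b) * e‖ := norm_sub_le _ _
        _ ≤ (δ * R) + (δ * R) * 1 := by
            have h2 : ‖b - e * b‖ ≤ δ * R := by rw [norm_sub_rev]; exact hEb
            have h3 : ‖(b - e * b) * e‖ ≤ (δ * R) * 1 := aux_mul_norm_le h2 henorm
            linarith
        _ ≤ R * R * δ := by nlinarith [mul_nonneg (mul_nonneg hδ0.le hR0.le) (by linarith : (0 : ℝ) ≤ R - 2)]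
    calc ‖s - e * s‖ ≤ Real.sqrt (R * R * δ) := aux_norm_le_sqrt h1
      _ = R * Real.sqrt δ := by
          rw [Real.sqrt_mul (by positivity), Real.sqrt_mul_self hR0.le]
  -- es 0 acts approximately as identity on s
  have he0s : ‖es 0 * s - s‖ ≤ 2 * (R * Real.sqrt δ) := by
    have hkey : es 0 * (e * s) = e * s := by rw [← mul_assoc, hese 0]
    have hsplit2 : es 0 * s - s = es 0 * (s - e * s) - (s - e * s) := by
      rw [mul_sub, hkey]; abel
    calc ‖es 0 * s - s‖ ≤ ‖es 0 * (s - e * s)‖ + ‖s - e * s‖ := by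
          rw [hsplit2]; exact norm_sub_le _ _
      _ ≤ 1 * (R * Real.sqrt δ) + R * Real.sqrt δ := by
          have := aux_mul_norm_le he0n hts; linarith
      _ = 2 * (R * Real.sqrt δ) := by ring
  -- y 0 is bounded by 2
  have hy0n : ‖y 0‖ ≤ 2 := by
    have h1 : ‖y 0 * star (y 0)‖ ≤ 1 + δ := by
      calc ‖y 0 * star (y 0)‖ = ‖(y 0 * star (y 0) - es 0) + es 0‖ := by rw [sub_add_cancel]
        _ ≤ ‖y 0 * star (y 0) - es 0‖ + ‖es 0‖ := norm_add_le _ _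
        _ ≤ 1 + δ := by linarith [(hyy 0).le]
    have h2 := CStarRing.norm_self_mul_star (x := y 0)
    nlinarith [norm_nonneg (y 0)]
  -- y 0 ≈ y 0 * cs 0
  have hyc : ‖y 0 - y 0 * cs 0‖ ≤ 2 * Real.sqrt δ := by
    have hexp2 : star (y 0 - y 0 * cs 0) * (y 0 - y 0 * cs 0) =
        cs 0 * (star (y 0) * y 0 * cs 0 - star (y 0) * y 0) -
          (star (y 0) * y 0 * cs 0 - star (y 0) * y 0) := by
      rw [star_sub, star_mul (y 0) (cs 0), hc0sa]
      simp only [mul_sub, sub_mul, mul_assoc]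
      abel
    have h1 : ‖star (y 0 - y 0 * cs 0) * (y 0 - y 0 * cs 0)‖ ≤ 2 * δ := by
      rw [hexp2]
      calc ‖_ - _‖ ≤ ‖cs 0 * (star (y 0) * y 0 * cs 0 - star (y 0) * y 0)‖ +
            ‖star (y 0) * y 0 * cs 0 - star (y 0) * y 0‖ := norm_sub_le _ _
        _ ≤ 1 * δ + δ := by
            have := aux_mul_norm_le hc0n (hyyc 0).le; linarith [(hyyc 0).le]
        _ = 2 * δ := by ring
    calc ‖y 0 - y 0 * cs 0‖ ≤ Real.sqrt (2 * δ) := aux_norm_le_sqrt' h1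
      _ ≤ Real.sqrt (4 * δ) := Real.sqrt_le_sqrt (by linarith)
      _ = 2 * Real.sqrt δ := by
          rw [Real.sqrt_mul (by norm_num), show (4 : ℝ) = 2 ^ 2 by norm_num,
            Real.sqrt_sq (by norm_num)]
  -- cs 0 * s is small
  have hcs0e : cs 0 * e = 0 := by
    have h1 : cs 0 * e = star (e * cs 0) := by rw [star_mul, hesa, hc0sa]
    rw [h1, hec 0, star_zero]
  have hcss : ‖cs 0 * s‖ ≤ 1 * (R * Real.sqrt δ) := by
    have h1 : cs 0 * s = cs 0 * (s - e * s) := by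
      rw [mul_sub, ← mul_assoc, hcs0e, zero_mul, sub_zero]
    rw [h1]; exact aux_mul_norm_le hc0n hts
  -- y 0 * s is small
  have hys : ‖y 0 * s‖ ≤ 4 * (R * Real.sqrt δ) := by
    have hsplit3 : y 0 * s = (y 0 - y 0 * cs 0) * s + y 0 * (cs 0 * s) := by noncomm_ring
    have n1 : ‖(y 0 - y 0 * cs 0) * s‖ ≤ (2 * Real.sqrt δ) * R := aux_mul_norm_le hyc hsnorm
    have n2 : ‖y 0 * (cs 0 * s)‖ ≤ 2 * (1 * (R * Real.sqrt δ)) := aux_mul_norm_le hy0n hcss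
    calc ‖y 0 * s‖ ≤ ‖(y 0 - y 0 * cs 0) * s‖ + ‖y 0 * (cs 0 * s)‖ := by
          rw [hsplit3]; exact norm_add_le _ _
      _ ≤ (2 * Real.sqrt δ) * R + 2 * (1 * (R * Real.sqrt δ)) := add_le_add n1 n2
      _ = 4 * (R * Real.sqrt δ) := by ring
  -- key numeric facts
  have h5 : R * R * Real.sqrt δ ≤ ε / 9 := by
    have h := mul_le_mul_of_nonneg_left hsd (by positivity : (0 : ℝ) ≤ R * R)
    have heq : R * R * (ε / (9 * R ^ 2)) = ε / 9 := by
      field_simp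
    linarith [heq.le]
  have h4 : R * R * δ ≤ R * R * Real.sqrt δ :=
    mul_le_mul_of_nonneg_left hδsd (by positivity)
  -- the witness
  refine ⟨s * y 0, ?_, ?_⟩
  · -- ‖Y Y* - b‖ < ε
    have hsplit : (s * y 0) * star (s * y 0) - b =
        s * (y 0 * star (y 0) - es 0) * s + s * (es 0 * s - s) := by
      rw [star_mul, hs_sa, ← hss]; noncomm_ring
    have n1 : ‖s * (y 0 * star (y 0) - es 0) * s‖ ≤ R * δ * R :=
      aux_mul_norm_le (aux_mul_norm_le hsnorm (hyy 0).le) hsnorm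
    have n2 : ‖s * (es 0 * s - s)‖ ≤ R * (2 * (R * Real.sqrt δ)) :=
      aux_mul_norm_le hsnorm he0s
    have hb1 : ‖(s * y 0) * star (s * y 0) - b‖ ≤ R * R * δ + 2 * (R * R * Real.sqrt δ) := by
      calc ‖(s * y 0) * star (s * y 0) - b‖ ≤
            ‖s * (y 0 * star (y 0) - es 0) * s‖ + ‖s * (es 0 * s - s)‖ := by
            rw [hsplit]; exact norm_add_le _ _
        _ ≤ R * δ * R + R * (2 * (R * Real.sqrt δ)) := add_le_add n1 n2
        _ = R * R * δ + 2 * (R * R * Real.sqrt δ) := by ring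
    refine lt_of_le_of_lt hb1 ?_
    linarith
  · -- ‖Y²‖ < ε
    have hsplit4 : (s * y 0) * (s * y 0) = s * (y 0 * s) * y 0 := by noncomm_ring
    have n3 : ‖s * (y 0 * s) * y 0‖ ≤ R * (4 * (R * Real.sqrt δ)) * 2 :=
      aux_mul_norm_le (aux_mul_norm_le hsnorm hys) hy0n
    have hb2 : ‖(s * y 0) * (s * y 0)‖ ≤ 8 * (R * R * Real.sqrt δ) := by
      calc ‖(s * y 0) * (s * y 0)‖ = ‖s * (y 0 * s) * y 0‖ := by rw [hsplit4]
        _ ≤ R * (4 * (R * Real.sqrt δ)) * 2 := n3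
        _ = 8 * (R * R * Real.sqrt δ) := by ring
    refine lt_of_le_of_lt hb2 ?_
    linarith
end
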